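/- Let A1 : D → S be an allotment that induces no negative loop, and let s_j ∈ S. Let M = 1 + Σ_{d∈D, s∈S} |CM(d, s)| + Σ_{s∈S} Σ_{j=1}^{|D|+1} |p_s(j)|. Extend the instance by a new demand unit d* ∉ D with CM(d*, s_j) = 0 and CM(d*, s) = M for every s ≠ s_j, and let A2 : D ∪ {d*} → S extend A1 with A2(d*) = s_j (so the occupancy of s_j increases by one and every penalty transfer edge directed into s_j decreases in weight). Among all loops of A2 that begin at s_j and whose closing edge is a penalty transfer edge directed into s_j, let C_min be one of minimum cost. Then: (a) if cost(C_min) ≥ 0 (or no such loop exists), then A2 induces no negative loop; (b) if cost(C_min) < 0 and A3 is the allotment obtained from A2 by removing C_min, then A3 induces no negative loop. -/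

import Mathlib

open Finset

/-- Cyclic successor on `Fin n`. -/
def cnext {n : ℕ} (t : Fin n) : Fin n := ⟨(t.val + 1) % n, Nat.mod_lt _ t.pos⟩

section LBDD

variable {D S : Type*} [Fintype D] [DecidableEq D] [Fintype S] [DecidableEq S]

/-- Occupancy of a service center `s` under allotment `A`: the number of demand
units assigned to `s`. -/
def occ (A : D → S) (s : S) : ℕ := (Finset.univ.filter fun d => A d = s).card

/-- Total cost of an allotment: assignment costs plus accumulated per-allotment penalties. -/
def cost (CM : D → S → ℤ) (p : S → ℕ → ℤ) (A : D → S) : ℤ :=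
  (∑ d, CM d (A d)) + ∑ s, ∑ j ∈ Finset.Icc 1 (occ A s), p s j

/-- Weight of the penalty transfer edge from `si` to `sj` under allotment `A`. -/
def wpen (p : S → ℕ → ℤ) (A : D → S) (si sj : S) : ℤ :=
  p si (occ A si + 1) - p sj (occ A sj)

/-- A loop: a cyclic sequence of `m` edges; edge `t` is directed from `vtx t` to
`vtx (cnext t)`; if `dem t = some d` it is a transfer edge moving demand unit `d`,
and if `dem t = none` it is a penalty transfer edge. -/
structure Loop (S D : Type*) where
  m : ℕ
  vtx : Fin m → S
  dem : Fin m → Option D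

/-- `L` is a loop of allotment `A`: at least two pairwise distinct service centers,
each transfer edge moves a demand unit currently assigned to its tail, the demand
units are pairwise distinct, and there is at most one penalty transfer edge
(no penalty edge: type (i), a cycle of transfer edges; one penalty edge: type (ii),
a path of transfer edges closed by a penalty transfer edge). -/
def IsLoop (A : D → S) (L : Loop S D) : Prop :=
  2 ≤ L.m ∧ Function.Injective L.vtx ∧
  (∀ t d, L.dem t = some d → A d = L.vtx t) ∧
  (∀ t t' d, L.dem t = some d → L.dem t' = some d → t = t') ∧
  (∀ t t', L.dem t = none → L.dem t' = none → t = t')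

/-- Weight of edge `t` of loop `L`. -/
def edgeWt (CM : D → S → ℤ) (p : S → ℕ → ℤ) (A : D → S) (L : Loop S D) (t : Fin L.m) : ℤ :=
  match L.dem t with
  | some d => CM d (L.vtx (cnext t)) - CM d (L.vtx t)
  | none => wpen p A (L.vtx t) (L.vtx (cnext t))

/-- Cost of a loop: the sum of the weights of its edges. -/
def loopCost (CM : D → S → ℤ) (p : S → ℕ → ℤ) (A : D → S) (L : Loop S D) : ℤ :=
  ∑ t, edgeWt CM p A L t

/-- `A` induces a negative loop. -/
def InducesNegLoop (CM : D → S → ℤ) (p : S → ℕ → ℤ) (A : D → S) : Prop :=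
  ∃ L : Loop S D, IsLoop A L ∧ loopCost CM p A L < 0

/-- Removing a loop from `A`: for each transfer edge, reassign its demand unit
from the tail to the head of the edge. -/
noncomputable def removeLoop (A : D → S) (L : Loop S D) : D → S := fun x =>
  if h : ∃ t, L.dem t = some x then L.vtx (cnext (Classical.choose h)) else A x

end LBDD

set_option linter.unusedSectionVars false
set_option linter.unusedVariables false
set_option maxHeartbeats 1000000

/-! ### auxiliary lemmas -/

set_option linter.unusedSectionVars false

lemma cnext_eq_add_one {n : ℕ} [NeZero n] (t : Fin n) : cnext t = t + 1 := by
  apply Fin.ext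
  simp only [cnext, Fin.add_def, Fin.val_one']
  rw [Nat.add_mod_mod]

lemma cnext_ne {n : ℕ} (hn : 2 ≤ n) (t : Fin n) : cnext t ≠ t := by
  intro h
  have h' : (t.val + 1) % n = t.val := congrArg Fin.val h
  rcases Nat.lt_or_ge (t.val + 1) n with h1 | h1
  · rw [Nat.mod_eq_of_lt h1] at h'; omega
  · have : t.val + 1 = n := by have := t.isLt; omega
    rw [this, Nat.mod_self] at h'; omega

lemma cnext_bijective {n : ℕ} [NeZero n] : Function.Bijective (cnext : Fin n → Fin n) := by
  have : (cnext : Fin n → Fin n) = fun t => t + 1 := funext fun t => cnext_eq_add_one t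
  rw [this]
  exact (Equiv.addRight (1 : Fin n)).bijective

section LBDD2

variable {D S : Type*} [Fintype D] [DecidableEq D] [Fintype S] [DecidableEq S]

lemma occ_eq_sum (A : D → S) (s : S) : occ A s = ∑ d, if A d = s then 1 else 0 := by
  rw [occ, Finset.card_filter]

def penSum (p : S → ℕ → ℤ) (s : S) (n : ℕ) : ℤ := ∑ j ∈ Finset.Icc 1 n, p s j

lemma cost_eq (CM : D → S → ℤ) (p : S → ℕ → ℤ) (A : D → S) :
    cost CM p A = (∑ d, CM d (A d)) + ∑ s, penSum p s (occ A s) := rfl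

lemma penSum_succ (p : S → ℕ → ℤ) (s : S) (n : ℕ) :
    penSum p s (n + 1) = penSum p s n + p s (n + 1) :=
  Finset.sum_Icc_succ_top (by omega) _

lemma removeLoop_eq_of_dem {A : D → S} {L : Loop S D}
    (h4 : ∀ t t' d, L.dem t = some d → L.dem t' = some d → t = t')
    {t : Fin L.m} {d : D} (ht : L.dem t = some d) :
    removeLoop A L d = L.vtx (cnext t) := by
  rw [removeLoop, dif_pos ⟨t, ht⟩]
  congr 1
  have := Classical.choose_spec (⟨t, ht⟩ : ∃ t, L.dem t = some d)
  exact congrArg cnext (h4 _ _ _ this ht)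

lemma removeLoop_eq_of_not {A : D → S} {L : Loop S D} {d : D}
    (h : ¬ ∃ t, L.dem t = some d) : removeLoop A L d = A d := by
  rw [removeLoop, dif_neg h]

end LBDD2

section LBDD3

variable {D S : Type*} [Fintype D] [DecidableEq D] [Fintype S] [DecidableEq S]

def demOf (L : Loop S D) (t : Fin L.m) (h : L.dem t ≠ none) : D :=
  (L.dem t).get (Option.ne_none_iff_isSome.mp h)

lemma demOf_spec (L : Loop S D) (t : Fin L.m) (h : L.dem t ≠ none) :
    L.dem t = some (demOf L t h) := (Option.some_get _).symm

lemma edgeWt_some (CM : D → S → ℤ) (p : S → ℕ → ℤ) (A : D → S) {L : Loop S D}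
    {t : Fin L.m} {d : D} (h : L.dem t = some d) :
    edgeWt CM p A L t = CM d (L.vtx (cnext t)) - CM d (L.vtx t) := by
  unfold edgeWt
  split
  · next d' hd' => rw [h] at hd'; cases hd'; rfl
  · next hd' => rw [h] at hd'; cases hd'

lemma edgeWt_none (CM : D → S → ℤ) (p : S → ℕ → ℤ) (A : D → S) {L : Loop S D}
    {t : Fin L.m} (h : L.dem t = none) :
    edgeWt CM p A L t = wpen p A (L.vtx t) (L.vtx (cnext t)) := by
  unfold edgeWt
  split
  · next d' hd' => rw [h] at hd'; cases hd'
  · next hd' => rfl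

theorem cost_removeLoop (CM : D → S → ℤ) (p : S → ℕ → ℤ) (A : D → S) (L : Loop S D)
    (hL : IsLoop A L) :
    cost CM p (removeLoop A L) = cost CM p A + loopCost CM p A L := by
  classical
  obtain ⟨hm, hinj, h3, h4, h5⟩ := hL
  haveI : NeZero L.m := ⟨by omega⟩
  set A' := removeLoop A L with hA'
  set T : Finset (Fin L.m) := univ.filter (fun t => L.dem t ≠ none) with hT
  set DS : Finset D := univ.filter (fun d => ∃ t, L.dem t = some d) with hDS
  have hTmem : ∀ {t}, t ∈ T ↔ L.dem t ≠ none := by intro t; simp [hT]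
  have hA'mem : ∀ (t) (ht : t ∈ T), A' (demOf L t (hTmem.mp ht)) = L.vtx (cnext t) := by
    intro t ht
    rw [hA']
    exact removeLoop_eq_of_dem h4 (demOf_spec L t (hTmem.mp ht))
  have hAmem : ∀ (t) (ht : t ∈ T), A (demOf L t (hTmem.mp ht)) = L.vtx t := by
    intro t ht
    exact h3 _ _ (demOf_spec L t (hTmem.mp ht))
  -- generic bijection transport
  have hbij : ∀ (M : Type) (inst : AddCommMonoid M), True := fun _ _ => trivial
  have hmaps : ∀ (t) (ht : t ∈ T), demOf L t (hTmem.mp ht) ∈ DS := by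
    intro t ht; simp only [hDS, Finset.mem_filter, Finset.mem_univ, true_and]
    exact ⟨t, demOf_spec L t (hTmem.mp ht)⟩
  have hinj2 : ∀ (a₁ : Fin L.m) (ha₁ : a₁ ∈ T) (a₂ : Fin L.m) (ha₂ : a₂ ∈ T),
      demOf L a₁ (hTmem.mp ha₁) = demOf L a₂ (hTmem.mp ha₂) → a₁ = a₂ := by
    intro a1 h1 a2 h2 he
    exact h4 _ _ _ (demOf_spec L a1 (hTmem.mp h1)) (he ▸ demOf_spec L a2 (hTmem.mp h2))
  have hsurj : ∀ d ∈ DS, ∃ t, ∃ (ht : t ∈ T), demOf L t (hTmem.mp ht) = d := by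
    intro d hd
    simp only [hDS, Finset.mem_filter, Finset.mem_univ, true_and] at hd
    obtain ⟨t, ht⟩ := hd
    have htT : t ∈ T := hTmem.mpr (by simp [ht])
    exact ⟨t, htT, (Option.some_inj.mp (ht.symm.trans (demOf_spec L t (hTmem.mp htT)))).symm⟩
  -- transfer sum
  have hCMsum : ∑ d, CM d (A' d) = (∑ d, CM d (A d)) + ∑ t ∈ T, edgeWt CM p A L t := by
    have h1 : ∑ t ∈ T, edgeWt CM p A L t = ∑ d ∈ DS, (CM d (A' d) - CM d (A d)) := by
      refine Finset.sum_bij (fun t ht => demOf L t (hTmem.mp ht)) hmaps hinj2 hsurj ?_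
      intro t ht
      rw [hA'mem t ht, hAmem t ht, edgeWt_some CM p A (demOf_spec L t (hTmem.mp ht))]
    have h2 : ∑ d, (CM d (A' d) - CM d (A d)) = ∑ d ∈ DS, (CM d (A' d) - CM d (A d)) := by
      refine (Finset.sum_subset (Finset.subset_univ DS) ?_).symm
      intro d _ hd
      have hnex : ¬ ∃ t, L.dem t = some d := by simpa [hDS] using hd
      rw [hA', removeLoop_eq_of_not hnex]; ring
    have h6 : ∑ d, (CM d (A' d) - CM d (A d)) = (∑ d, CM d (A' d)) - ∑ d, CM d (A d) :=
      Finset.sum_sub_distrib _ _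
    rw [h2, ← h1] at h6
    linarith
  -- occupancy identities
  have occA' : ∀ s, occ A' s = (∑ d ∈ univ \ DS, if A d = s then 1 else 0)
      + ∑ t ∈ T, (if L.vtx (cnext t) = s then 1 else 0) := by
    intro s
    have hsplit : (∑ d ∈ univ \ DS, if A' d = s then (1:ℕ) else 0)
        + ∑ d ∈ DS, (if A' d = s then 1 else 0) = occ A' s := by
      rw [occ_eq_sum]; exact Finset.sum_sdiff (Finset.subset_univ DS)
    rw [← hsplit]
    congr 1
    · apply Finset.sum_congr rfl
      intro d hd
      have hnex : ¬ ∃ t, L.dem t = some d := by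
        simp only [Finset.mem_sdiff, hDS, Finset.mem_filter, Finset.mem_univ, true_and] at hd
        exact hd
      rw [hA', removeLoop_eq_of_not hnex]
    · refine (Finset.sum_bij (fun t ht => demOf L t (hTmem.mp ht)) hmaps hinj2 hsurj ?_).symm
      intro t ht
      rw [hA'mem t ht]
  have occA : ∀ s, occ A s = (∑ d ∈ univ \ DS, if A d = s then 1 else 0)
      + ∑ t ∈ T, (if L.vtx t = s then 1 else 0) := by
    intro s
    have hsplit : (∑ d ∈ univ \ DS, if A d = s then (1:ℕ) else 0)
        + ∑ d ∈ DS, (if A d = s then 1 else 0) = occ A s := by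
      rw [occ_eq_sum]; exact Finset.sum_sdiff (Finset.subset_univ DS)
    rw [← hsplit]
    congr 1
    refine (Finset.sum_bij (fun t ht => demOf L t (hTmem.mp ht)) hmaps hinj2 hsurj ?_).symm
    intro t ht
    rw [hAmem t ht]
  by_cases hno : ∃ t0, L.dem t0 = none
  · -- type (ii)
    obtain ⟨t0, hd0⟩ := hno
    have hTe : T = univ.erase t0 := by
      ext t
      simp only [hTmem, Finset.mem_erase, Finset.mem_univ, and_true]
      constructor
      · intro h he; exact h (he ▸ hd0)
      · intro h hn; exact h (h5 t t0 hn hd0)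
    set si := L.vtx (cnext t0) with hsi_def
    set sb := L.vtx t0 with hsb_def
    have hne : sb ≠ si := by
      intro h
      exact cnext_ne hm t0 (hinj h.symm)
    have key : ∀ s, occ A' s + (if si = s then 1 else 0)
        = occ A s + (if sb = s then 1 else 0) := by
      intro s
      have e1 : (∑ t ∈ T, (if L.vtx (cnext t) = s then (1:ℕ) else 0))
          + (if L.vtx (cnext t0) = s then 1 else 0)
          = ∑ t, (if L.vtx (cnext t) = s then 1 else 0) := by
        rw [hTe]; exact Finset.sum_erase_add univ _ (Finset.mem_univ t0)
      have e2 : (∑ t, (if L.vtx (cnext t) = s then (1:ℕ) else 0))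
          = ∑ t, (if L.vtx t = s then 1 else 0) :=
        Function.Bijective.sum_comp cnext_bijective (fun u => if L.vtx u = s then (1:ℕ) else 0)
      have e3 : (∑ t ∈ T, (if L.vtx t = s then (1:ℕ) else 0))
          + (if L.vtx t0 = s then 1 else 0)
          = ∑ t, (if L.vtx t = s then 1 else 0) := by
        rw [hTe]; exact Finset.sum_erase_add univ _ (Finset.mem_univ t0)
      rw [occA' s, occA s]
      simp only [hsi_def, hsb_def]
      omega
    have hne' : ¬ si = sb := fun h => hne h.symm
    have hsi : occ A' si + 1 = occ A si := by
      have := key si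
      simp [hne] at this
      omega
    have hsb : occ A' sb = occ A sb + 1 := by
      have := key sb
      simp [hne'] at this
      omega
    have hother : ∀ s, si ≠ s → sb ≠ s → occ A' s = occ A s := by
      intro s h1 h2
      have := key s
      simp only [if_neg h1, if_neg h2] at this
      omega
    have pen : ∑ s, penSum p s (occ A' s)
        = (∑ s, penSum p s (occ A s)) + (p sb (occ A sb + 1) - p si (occ A si)) := by
      have hz : ∀ x ∈ univ, x ∉ ({si, sb} : Finset S) →
          penSum p x (occ A' x) - penSum p x (occ A x) = 0 := by
        intro x _ hx
        simp only [Finset.mem_insert, Finset.mem_singleton] at hx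
        push_neg at hx
        rw [hother x (fun h => hx.1 h.symm) (fun h => hx.2 h.symm)]
        ring
      have hpair : ∑ x ∈ ({si, sb} : Finset S), (penSum p x (occ A' x) - penSum p x (occ A x))
          = ∑ x, (penSum p x (occ A' x) - penSum p x (occ A x)) :=
        Finset.sum_subset (Finset.subset_univ _) hz
      rw [Finset.sum_pair (fun h => hne h.symm)] at hpair
      have gsi : penSum p si (occ A' si) - penSum p si (occ A si) = -(p si (occ A si)) := by
        rw [← hsi, penSum_succ]; ring
      have gsb : penSum p sb (occ A' sb) - penSum p sb (occ A sb) = p sb (occ A sb + 1) := by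
        rw [hsb, penSum_succ]; ring
      have hsum : ∑ x, (penSum p x (occ A' x) - penSum p x (occ A x))
          = (∑ s, penSum p s (occ A' s)) - ∑ s, penSum p s (occ A s) :=
        Finset.sum_sub_distrib _ _
      rw [gsi, gsb] at hpair
      rw [hsum] at hpair
      linarith
    have lc : loopCost CM p A L
        = (∑ t ∈ T, edgeWt CM p A L t) + (p sb (occ A sb + 1) - p si (occ A si)) := by
      rw [loopCost, ← Finset.sum_erase_add univ _ (Finset.mem_univ t0), ← hTe]
      congr 1
      rw [edgeWt_none CM p A hd0]
      rfl
    rw [cost_eq, cost_eq, hCMsum, pen, lc]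
    ring
  · -- type (i)
    have hTu : T = univ := by
      ext t
      simp only [hTmem, Finset.mem_univ, iff_true]
      intro hn; exact hno ⟨t, hn⟩
    have hocc : ∀ s, occ A' s = occ A s := by
      intro s
      rw [occA' s, occA s]
      congr 1
      rw [hTu]
      exact Function.Bijective.sum_comp cnext_bijective (fun u => if L.vtx u = s then (1:ℕ) else 0)
    have pen : ∑ s, penSum p s (occ A' s) = ∑ s, penSum p s (occ A s) := by
      apply Finset.sum_congr rfl; intro s _; rw [hocc s]
    have lc : loopCost CM p A L = ∑ t ∈ T, edgeWt CM p A L t := by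
      rw [loopCost, hTu]
    rw [cost_eq, cost_eq, hCMsum, pen, lc]
    ring

end LBDD3

section Peeling

variable {E S : Type*} [Fintype E] [DecidableEq E] [Fintype S] [DecidableEq S]

lemma sum_fin_list {M : Type*} [AddCommMonoid M] (l : List E) (f : E → M) :
    (l.map f).sum = ∑ i : Fin l.length, f (l.get i) := by
  induction l with
  | nil => simp
  | cons a l ih =>
    rw [List.map_cons, List.sum_cons]
    simp only [List.length_cons]
    rw [Fin.sum_univ_succ, ih]
    simp

lemma sum_toFinset_eq {M : Type*} [AddCommMonoid M] (l : List E) (hnod : l.Nodup) (f : E → M) :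
    ∑ e ∈ l.toFinset, f e = ∑ i : Fin l.length, f (l.get i) := by
  rw [List.sum_toFinset f hnod, sum_fin_list]

lemma getElem_congr_idx' {α : Type*} (l : List α) (a b : ℕ) (ha : a < l.length) (hb : b < l.length)
    (h : a = b) : l[a]'ha = l[b]'hb := by subst h; rfl

/-- Data of a simple transfer path from `ws.head` to `ws.getLast`. -/
structure PathData (A B : E → S) where
  ws : List S
  es : List E
  hlen : ws.length = es.length + 1
  hpos : 0 < es.length
  hnodW : ws.Nodup
  hA : ∀ (i : ℕ) (hi : i < es.length), A (es[i]'hi) = ws[i]'(by omega)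
  hB : ∀ (i : ℕ) (hi : i < es.length), B (es[i]'hi) = ws[i+1]'(by omega)

/-- Data of a simple transfer cycle. -/
structure CycData (A B : E → S) where
  ws : List S
  es : List E
  hlen : ws.length = es.length
  hpos : 2 ≤ es.length
  hnodW : ws.Nodup
  hA : ∀ (i : ℕ) (hi : i < es.length), A (es[i]'hi) = ws[i]'(by omega)
  hB : ∀ (i : ℕ) (hi : i < es.length), B (es[i]'hi) =
    ws[(i+1) % ws.length]'(Nat.mod_lt _ (by omega))

variable {A B : E → S}

lemma PathData.wsne (P : PathData A B) : P.ws ≠ [] := by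
  have := P.hlen; intro h; rw [h] at this; simp at this

lemma PathData.nodE (P : PathData A B) : P.es.Nodup := by
  rw [List.nodup_iff_injective_get]
  intro i j hij
  have h1 : A (P.es.get i) = P.ws[(i:ℕ)]'(by have := P.hlen; have := i.isLt; omega) := by
    rw [List.get_eq_getElem]; exact P.hA i i.isLt
  have h2 : A (P.es.get j) = P.ws[(j:ℕ)]'(by have := P.hlen; have := j.isLt; omega) := by
    rw [List.get_eq_getElem]; exact P.hA j j.isLt
  rw [hij] at h1
  have := h1.symm.trans h2
  have hval : (i:ℕ) = (j:ℕ) := (List.Nodup.getElem_inj_iff P.hnodW).mp this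
  exact Fin.ext hval

lemma CycData.nodE (C : CycData A B) : C.es.Nodup := by
  rw [List.nodup_iff_injective_get]
  intro i j hij
  have h1 : A (C.es.get i) = C.ws[(i:ℕ)]'(by have := C.hlen; have := i.isLt; omega) := by
    rw [List.get_eq_getElem]; exact C.hA i i.isLt
  have h2 : A (C.es.get j) = C.ws[(j:ℕ)]'(by have := C.hlen; have := j.isLt; omega) := by
    rw [List.get_eq_getElem]; exact C.hA j j.isLt
  rw [hij] at h1
  have := h1.symm.trans h2
  have hval : (i:ℕ) = (j:ℕ) := (List.Nodup.getElem_inj_iff C.hnodW).mp this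
  exact Fin.ext hval

/-- The type (ii) loop associated to a path (with closing penalty edge). -/
def PathData.loop (P : PathData A B) : Loop S E :=
  ⟨P.ws.length, P.ws.get,
   fun i => if h : (i : ℕ) < P.es.length then some (P.es[(i:ℕ)]'h) else none⟩

/-- The type (i) loop associated to a cycle. -/
def CycData.loop (C : CycData A B) : Loop S E :=
  ⟨C.ws.length, C.ws.get,
   fun i => some (C.es[(i:ℕ)]'(by rw [← C.hlen]; exact i.isLt))⟩


lemma PathData.loop_m (P : PathData A B) : P.loop.m = P.ws.length := rfl

lemma PathData.loop_vtx (P : PathData A B) (t : Fin P.loop.m) : P.loop.vtx t = P.ws.get (Fin.cast P.loop_m t) := rfl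

lemma PathData.loop_dem_lt (P : PathData A B) {t : Fin P.loop.m} (h : (t:ℕ) < P.es.length) :
    P.loop.dem t = some (P.es[(t:ℕ)]'h) := dif_pos h

lemma PathData.loop_dem_ge (P : PathData A B) {t : Fin P.loop.m} (h : ¬ (t:ℕ) < P.es.length) :
    P.loop.dem t = none := dif_neg h

lemma CycData.loop_m (C : CycData A B) : C.loop.m = C.ws.length := rfl

lemma CycData.loop_vtx (C : CycData A B) (t : Fin C.loop.m) : C.loop.vtx t = C.ws.get (Fin.cast C.loop_m t) := rfl

lemma CycData.loop_dem (C : CycData A B) (t : Fin C.loop.m) :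
    C.loop.dem t = some (C.es[(t:ℕ)]'(by rw [← C.hlen]; exact t.isLt)) := rfl

lemma PathData.isLoop (P : PathData A B) : IsLoop A P.loop := by
  have hlen := P.hlen
  have hpos := P.hpos
  refine ⟨?_, (List.nodup_iff_injective_get).mp P.hnodW, ?_, ?_, ?_⟩
  · rw [PathData.loop_m]; omega
  · intro t d ht
    by_cases h : (t:ℕ) < P.es.length
    · rw [P.loop_dem_lt h] at ht
      have hd := Option.some_inj.mp ht
      rw [← hd, PathData.loop_vtx, List.get_eq_getElem]
      exact P.hA t h
    · rw [P.loop_dem_ge h] at ht; cases ht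
  · intro t t' d ht ht'
    by_cases h : (t:ℕ) < P.es.length
    · by_cases h' : (t':ℕ) < P.es.length
      · rw [P.loop_dem_lt h] at ht
        rw [P.loop_dem_lt h'] at ht'
        have := (Option.some_inj.mp ht).trans (Option.some_inj.mp ht').symm
        exact Fin.ext ((List.Nodup.getElem_inj_iff P.nodE).mp this)
      · rw [P.loop_dem_ge h'] at ht'; cases ht'
    · rw [P.loop_dem_ge h] at ht; cases ht
  · intro t t' ht ht'
    by_cases h : (t:ℕ) < P.es.length
    · rw [P.loop_dem_lt h] at ht; cases ht
    · by_cases h' : (t':ℕ) < P.es.length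
      · rw [P.loop_dem_lt h'] at ht'; cases ht'
      · have h1 := t.isLt; have h2 := t'.isLt
        have hm' := P.loop_m
        exact Fin.ext (by omega)

lemma CycData.isLoop (C : CycData A B) : IsLoop A C.loop := by
  have hlen := C.hlen
  have hpos := C.hpos
  refine ⟨?_, (List.nodup_iff_injective_get).mp C.hnodW, ?_, ?_, ?_⟩
  · rw [CycData.loop_m]; omega
  · intro t d ht
    rw [C.loop_dem t] at ht
    have hd := Option.some_inj.mp ht
    rw [← hd, CycData.loop_vtx, List.get_eq_getElem]
    exact C.hA t (by rw [← C.hlen]; exact t.isLt)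
  · intro t t' d ht ht'
    rw [C.loop_dem t] at ht
    rw [C.loop_dem t'] at ht'
    have := (Option.some_inj.mp ht).trans (Option.some_inj.mp ht').symm
    exact Fin.ext ((List.Nodup.getElem_inj_iff C.nodE).mp this)
  · intro t t' ht _
    rw [C.loop_dem t] at ht; cases ht

/-- canonical transfer cost of a list of demand moves from `A` to `B` -/
def moveCost (CM' : E → S → ℤ) (A B : E → S) (es : List E) : ℤ :=
  ∑ i : Fin es.length, (CM' (es.get i) (B (es.get i)) - CM' (es.get i) (A (es.get i)))

lemma PathData.loopCost_eq (P : PathData A B) (CM' : E → S → ℤ) (p : S → ℕ → ℤ) :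
    loopCost CM' p A P.loop
      = moveCost CM' A B P.es + wpen p A (P.ws.getLast P.wsne) (P.ws.head P.wsne) := by
  classical
  have hlen := P.hlen
  have hpos := P.hpos
  rw [loopCost]
  have hm : P.loop.m = P.es.length + 1 := hlen
  rw [← Equiv.sum_comp (finCongr hm.symm) (fun t => edgeWt CM' p A P.loop t)]
  rw [Fin.sum_univ_castSucc]
  congr 1
  · rw [moveCost]
    apply Finset.sum_congr rfl
    intro i _
    have hi : (i : ℕ) < P.es.length := i.isLt
    have hval : ((finCongr hm.symm i.castSucc : Fin P.loop.m) : ℕ) = (i:ℕ) := rfl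
    have hdem : P.loop.dem (finCongr hm.symm i.castSucc) = some (P.es[(i:ℕ)]'hi) :=
      P.loop_dem_lt (by rw [hval]; exact hi)
    rw [edgeWt_some CM' p A hdem]
    have hv1 : P.loop.vtx (finCongr hm.symm i.castSucc) = P.ws[(i:ℕ)]'(by omega) := by
      rw [PathData.loop_vtx, List.get_eq_getElem]
      exact getElem_congr_idx' _ _ _ _ _ hval
    have hcn : (cnext (finCongr hm.symm i.castSucc) : ℕ) = (i:ℕ)+1 := by
      show ((i:ℕ)+1) % P.loop.m = (i:ℕ)+1
      rw [hm]
      exact Nat.mod_eq_of_lt (by omega)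
    have hv2 : P.loop.vtx (cnext (finCongr hm.symm i.castSucc)) = P.ws[(i:ℕ)+1]'(by omega) := by
      rw [PathData.loop_vtx, List.get_eq_getElem]
      exact getElem_congr_idx' _ _ _ _ _ hcn
    simp only [hv1, hv2, List.get_eq_getElem, P.hA i hi, P.hB i hi]
  · have hval : ((finCongr hm.symm (Fin.last P.es.length) : Fin P.loop.m) : ℕ) = P.es.length := rfl
    have hdem : P.loop.dem (finCongr hm.symm (Fin.last P.es.length)) = none :=
      P.loop_dem_ge (by rw [hval]; omega)
    rw [edgeWt_none CM' p A hdem]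
    have hv1 : P.loop.vtx (finCongr hm.symm (Fin.last P.es.length)) = P.ws.getLast P.wsne := by
      rw [PathData.loop_vtx, List.get_eq_getElem, List.getLast_eq_getElem]
      exact getElem_congr_idx' _ _ _ _ _ (by change ((finCongr hm.symm (Fin.last P.es.length) : Fin P.loop.m) : ℕ) = _; omega)
    have hcn : (cnext (finCongr hm.symm (Fin.last P.es.length)) : ℕ) = 0 := by
      show (P.es.length + 1) % P.loop.m = 0
      rw [hm]
      simp
    have hv2 : P.loop.vtx (cnext (finCongr hm.symm (Fin.last P.es.length))) = P.ws.head P.wsne := by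
      rw [PathData.loop_vtx, List.get_eq_getElem, List.head_eq_getElem]
      exact getElem_congr_idx' _ _ _ _ _ hcn
    rw [hv1, hv2]

lemma CycData.loopCost_eq (C : CycData A B) (CM' : E → S → ℤ) (p : S → ℕ → ℤ) :
    loopCost CM' p A C.loop = moveCost CM' A B C.es := by
  classical
  have hlen := C.hlen
  have hpos := C.hpos
  rw [loopCost]
  have hm : C.loop.m = C.es.length := hlen
  rw [← Equiv.sum_comp (finCongr hm.symm) (fun t => edgeWt CM' p A C.loop t), moveCost]
  apply Finset.sum_congr rfl
  intro i _
  have hi : (i : ℕ) < C.es.length := i.isLt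
  have hval : ((finCongr hm.symm i : Fin C.loop.m) : ℕ) = (i:ℕ) := rfl
  have hdem : C.loop.dem (finCongr hm.symm i) = some (C.es[(i:ℕ)]'hi) := by
    rw [C.loop_dem]
    exact rfl
  rw [edgeWt_some CM' p A hdem]
  have hv1 : C.loop.vtx (finCongr hm.symm i) = C.ws[(i:ℕ)]'(by omega) := by
    rw [CycData.loop_vtx, List.get_eq_getElem]
    exact getElem_congr_idx' _ _ _ _ _ hval
  have hv2 : C.loop.vtx (cnext (finCongr hm.symm i))
      = C.ws[((i:ℕ)+1) % C.ws.length]'(Nat.mod_lt _ (by omega)) := by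
    rw [CycData.loop_vtx, List.get_eq_getElem]
    exact getElem_congr_idx' _ _ _ _ _ rfl
  simp only [hv1, hv2, List.get_eq_getElem, C.hA i hi, C.hB i hi]

end Peeling

section Peeling2

variable {E S : Type*} [Fintype E] [DecidableEq E] [Fintype S] [DecidableEq S]

/-- peel the demands in `es` back from `B` to `A`. -/
def peelB (A B : E → S) (es : List E) : E → S := fun e => if e ∈ es then A e else B e

variable {A B : E → S}

lemma peelB_mem {es : List E} {e : E} (h : e ∈ es) : peelB A B es e = A e := if_pos h

lemma peelB_not_mem {es : List E} {e : E} (h : e ∉ es) : peelB A B es e = B e := if_neg h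

lemma PathData.BneA (P : PathData A B) : ∀ e ∈ P.es, B e ≠ A e := by
  intro e he
  obtain ⟨i, hi, rfl⟩ := List.mem_iff_getElem.mp he
  rw [P.hA i hi, P.hB i hi]
  intro h
  have := (List.Nodup.getElem_inj_iff P.hnodW).mp h
  omega

lemma CycData.BneA (C : CycData A B) : ∀ e ∈ C.es, B e ≠ A e := by
  intro e he
  obtain ⟨i, hi, rfl⟩ := List.mem_iff_getElem.mp he
  rw [C.hA i hi, C.hB i hi]
  intro h
  have := (List.Nodup.getElem_inj_iff C.hnodW).mp h
  have hlen := C.hlen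
  rcases Nat.lt_or_ge (i+1) C.ws.length with h1 | h1
  · rw [Nat.mod_eq_of_lt h1] at this; omega
  · have hp := C.hpos
    have h2 : i + 1 = C.ws.length := by clear this h he; omega
    rw [h2, Nat.mod_self] at this
    clear h he
    omega

lemma peel_diff_ssubset (es : List E) (hne : es ≠ []) (hBA : ∀ e ∈ es, B e ≠ A e) :
    (univ.filter fun e => peelB A B es e ≠ A e) ⊂ (univ.filter fun e => B e ≠ A e) := by
  constructor
  · intro e he
    simp only [Finset.mem_filter, Finset.mem_univ, true_and] at he ⊢
    by_cases h : e ∈ es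
    · exact absurd (peelB_mem h) he
    · rw [peelB_not_mem h] at he; exact he
  · intro hsub
    obtain ⟨e, he⟩ := List.exists_mem_of_ne_nil es hne
    have h1 : e ∈ univ.filter fun e => B e ≠ A e := by
      simp only [Finset.mem_filter, Finset.mem_univ, true_and]; exact hBA e he
    have h2 := hsub h1
    simp only [Finset.mem_filter, Finset.mem_univ, true_and] at h2
    exact h2 (peelB_mem he)

lemma occ_split (es : List E) (Bf : E → S) (s : S) :
    occ Bf s = (∑ e ∈ univ \ es.toFinset, if Bf e = s then (1:ℕ) else 0)
      + ∑ e ∈ es.toFinset, (if Bf e = s then 1 else 0) := by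
  rw [occ_eq_sum]
  exact (Finset.sum_sdiff (Finset.subset_univ _)).symm

lemma PathData.get_eq_A (P : PathData A B) (i : Fin P.es.length) :
    A (P.es.get i) = P.ws.get (finCongr P.hlen.symm i.castSucc) := by
  rw [List.get_eq_getElem, List.get_eq_getElem]
  exact (P.hA i i.isLt).trans (getElem_congr_idx' _ _ _ _ _ rfl)

lemma PathData.get_eq_B (P : PathData A B) (i : Fin P.es.length) :
    B (P.es.get i) = P.ws.get (finCongr P.hlen.symm i.succ) := by
  rw [List.get_eq_getElem, List.get_eq_getElem]
  exact (P.hB i i.isLt).trans (getElem_congr_idx' _ _ _ _ _ rfl)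

lemma PathData.last_eq (P : PathData A B) :
    P.ws.getLast P.wsne = P.ws.get (finCongr P.hlen.symm (Fin.last P.es.length)) := by
  rw [List.getLast_eq_getElem, List.get_eq_getElem]
  refine getElem_congr_idx' _ _ _ _ _ ?_
  have hv : ((finCongr P.hlen.symm (Fin.last P.es.length) : Fin P.ws.length) : ℕ) = P.es.length := rfl
  have := P.hlen
  omega

lemma PathData.head_eq (P : PathData A B) :
    P.ws.head P.wsne = P.ws.get (finCongr P.hlen.symm 0) := by
  rw [List.head_eq_getElem, List.get_eq_getElem]
  exact getElem_congr_idx' _ _ _ _ _ (by simp)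

lemma PathData.head_ne_last (P : PathData A B) : P.ws.head P.wsne ≠ P.ws.getLast P.wsne := by
  rw [P.head_eq, P.last_eq]
  intro h
  have := (List.nodup_iff_injective_get.mp P.hnodW) h
  have hv := congrArg Fin.val this
  have := P.hpos
  simp [Fin.val_last] at hv
  omega

lemma PathData.occ_peel (P : PathData A B) (s : S) :
    occ (peelB A B P.es) s + (if P.ws.getLast P.wsne = s then 1 else 0)
      = occ B s + (if P.ws.head P.wsne = s then 1 else 0) := by
  classical
  rw [occ_split P.es (peelB A B P.es) s, occ_split P.es B s]
  have hR : ∀ e ∈ univ \ P.es.toFinset, (if peelB A B P.es e = s then (1:ℕ) else 0)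
      = (if B e = s then 1 else 0) := by
    intro e he
    rw [Finset.mem_sdiff, List.mem_toFinset] at he
    rw [peelB_not_mem he.2]
  rw [Finset.sum_congr rfl hR]
  have hA' : ∑ e ∈ P.es.toFinset, (if peelB A B P.es e = s then (1:ℕ) else 0)
      = ∑ i : Fin P.es.length, (if P.ws.get (finCongr P.hlen.symm i.castSucc) = s then 1 else 0) := by
    rw [sum_toFinset_eq _ P.nodE]
    apply Finset.sum_congr rfl
    intro i _
    rw [peelB_mem (by rw [List.get_eq_getElem]; exact List.getElem_mem _), P.get_eq_A]
  have hB' : ∑ e ∈ P.es.toFinset, (if B e = s then (1:ℕ) else 0)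
      = ∑ i : Fin P.es.length, (if P.ws.get (finCongr P.hlen.symm i.succ) = s then 1 else 0) := by
    rw [sum_toFinset_eq _ P.nodE]
    apply Finset.sum_congr rfl
    intro i _
    rw [P.get_eq_B]
  rw [hA', hB', P.last_eq, P.head_eq]
  have key : (∑ i : Fin P.es.length, (if P.ws.get (finCongr P.hlen.symm i.castSucc) = s then (1:ℕ) else 0))
      + (if P.ws.get (finCongr P.hlen.symm (Fin.last P.es.length)) = s then 1 else 0)
      = (if P.ws.get (finCongr P.hlen.symm 0) = s then 1 else 0)
      + ∑ i : Fin P.es.length, (if P.ws.get (finCongr P.hlen.symm i.succ) = s then 1 else 0) := by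
    have h1 := Fin.sum_univ_castSucc
      (fun i : Fin (P.es.length + 1) => if P.ws.get (finCongr P.hlen.symm i) = s then (1:ℕ) else 0)
    have h2 := Fin.sum_univ_succ
      (fun i : Fin (P.es.length + 1) => if P.ws.get (finCongr P.hlen.symm i) = s then (1:ℕ) else 0)
    omega
  omega

lemma CycData.wspos (C : CycData A B) : 0 < C.ws.length := by
  have := C.hlen; have := C.hpos; omega

lemma CycData.get_eq_A (C : CycData A B) (i : Fin C.es.length) :
    A (C.es.get i) = C.ws.get (finCongr C.hlen.symm i) := by
  rw [List.get_eq_getElem, List.get_eq_getElem]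
  exact (C.hA i i.isLt).trans (getElem_congr_idx' _ _ _ _ _ rfl)

lemma CycData.get_eq_B (C : CycData A B) (i : Fin C.es.length) :
    B (C.es.get i) = C.ws.get (cnext (finCongr C.hlen.symm i)) := by
  rw [List.get_eq_getElem, List.get_eq_getElem]
  exact (C.hB i i.isLt).trans (getElem_congr_idx' _ _ _ _ _ rfl)

lemma CycData.occ_peel (C : CycData A B) (s : S) :
    occ (peelB A B C.es) s = occ B s := by
  classical
  haveI : NeZero C.ws.length := ⟨by have := C.wspos; omega⟩
  rw [occ_split C.es (peelB A B C.es) s, occ_split C.es B s]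
  have hR : ∀ e ∈ univ \ C.es.toFinset, (if peelB A B C.es e = s then (1:ℕ) else 0)
      = (if B e = s then 1 else 0) := by
    intro e he
    rw [Finset.mem_sdiff, List.mem_toFinset] at he
    rw [peelB_not_mem he.2]
  rw [Finset.sum_congr rfl hR]
  congr 1
  rw [sum_toFinset_eq _ C.nodE, sum_toFinset_eq _ C.nodE]
  have hA' : ∀ i : Fin C.es.length, (if peelB A B C.es (C.es.get i) = s then (1:ℕ) else 0)
      = (if C.ws.get (finCongr C.hlen.symm i) = s then 1 else 0) := by
    intro i
    rw [peelB_mem (by rw [List.get_eq_getElem]; exact List.getElem_mem _), C.get_eq_A]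
  have hB' : ∀ i : Fin C.es.length, (if B (C.es.get i) = s then (1:ℕ) else 0)
      = (if C.ws.get (cnext (finCongr C.hlen.symm i)) = s then 1 else 0) := by
    intro i
    rw [C.get_eq_B]
  rw [Finset.sum_congr rfl (fun i _ => hA' i), Finset.sum_congr rfl (fun i _ => hB' i)]
  have e1 : ∑ i : Fin C.es.length, (if C.ws.get (finCongr C.hlen.symm i) = s then (1:ℕ) else 0)
      = ∑ t : Fin C.ws.length, (if C.ws.get t = s then 1 else 0) :=
    Equiv.sum_comp (finCongr C.hlen.symm) (fun t => if C.ws.get t = s then (1:ℕ) else 0)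
  have e2 : ∑ i : Fin C.es.length, (if C.ws.get (cnext (finCongr C.hlen.symm i)) = s then (1:ℕ) else 0)
      = ∑ t : Fin C.ws.length, (if C.ws.get (cnext t) = s then 1 else 0) :=
    Equiv.sum_comp (finCongr C.hlen.symm) (fun t => if C.ws.get (cnext t) = s then (1:ℕ) else 0)
  have e3 : ∑ t : Fin C.ws.length, (if C.ws.get (cnext t) = s then (1:ℕ) else 0)
      = ∑ t : Fin C.ws.length, (if C.ws.get t = s then 1 else 0) :=
    Function.Bijective.sum_comp cnext_bijective (fun u => if C.ws.get u = s then (1:ℕ) else 0)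
  rw [e1, e2, e3]

lemma transfer_peel (CM' : E → S → ℤ) (es : List E) (hnod : es.Nodup) :
    ∑ e, CM' e (B e) = (∑ e, CM' e (peelB A B es e)) + moveCost CM' A B es := by
  classical
  have h1 : ∑ e, (CM' e (B e) - CM' e (peelB A B es e))
      = ∑ e ∈ es.toFinset, (CM' e (B e) - CM' e (peelB A B es e)) := by
    refine (Finset.sum_subset (Finset.subset_univ _) ?_).symm
    intro e _ he
    rw [List.mem_toFinset] at he
    rw [peelB_not_mem he]; ring
  have h2 : ∑ e ∈ es.toFinset, (CM' e (B e) - CM' e (peelB A B es e)) = moveCost CM' A B es := by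
    rw [sum_toFinset_eq _ hnod, moveCost]
    apply Finset.sum_congr rfl
    intro i _
    rw [peelB_mem (by rw [List.get_eq_getElem]; exact List.getElem_mem _)]
  have h3 : ∑ e, (CM' e (B e) - CM' e (peelB A B es e))
      = (∑ e, CM' e (B e)) - ∑ e, CM' e (peelB A B es e) := Finset.sum_sub_distrib _ _
  rw [h1, h2] at h3
  linarith

lemma PathData.cost_peel (P : PathData A B) (CM' : E → S → ℤ) (p : S → ℕ → ℤ) :
    cost CM' p B = cost CM' p (peelB A B P.es) + moveCost CM' A B P.es
      + (p (P.ws.getLast P.wsne) (occ B (P.ws.getLast P.wsne))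
        - p (P.ws.head P.wsne) (occ B (P.ws.head P.wsne) + 1)) := by
  classical
  set B' := peelB A B P.es with hB'
  set sh := P.ws.head P.wsne with hsh
  set sl := P.ws.getLast P.wsne with hsl
  have hhl : sh ≠ sl := P.head_ne_last
  have hocch : occ B' sh = occ B sh + 1 := by
    have := P.occ_peel sh
    rw [← hB'] at this
    rw [← hsh, ← hsl, if_neg (fun h => hhl h.symm), if_pos rfl] at this
    omega
  have hoccl : occ B sl = occ B' sl + 1 := by
    have := P.occ_peel sl
    rw [← hB'] at this
    rw [← hsh, ← hsl, if_pos rfl, if_neg hhl] at this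
    omega
  have hocco : ∀ s, sh ≠ s → sl ≠ s → occ B' s = occ B s := by
    intro s h1 h2
    have := P.occ_peel s
    rw [← hB'] at this
    rw [← hsh, ← hsl, if_neg h2, if_neg h1] at this
    omega
  have pen : ∑ s, penSum p s (occ B s)
      = (∑ s, penSum p s (occ B' s)) + (p sl (occ B sl) - p sh (occ B sh + 1)) := by
    have hz : ∀ x ∈ univ, x ∉ ({sh, sl} : Finset S) →
        penSum p x (occ B x) - penSum p x (occ B' x) = 0 := by
      intro x _ hx
      simp only [Finset.mem_insert, Finset.mem_singleton] at hx
      push_neg at hx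
      rw [hocco x (fun h => hx.1 h.symm) (fun h => hx.2 h.symm)]
      ring
    have hpair : ∑ x ∈ ({sh, sl} : Finset S), (penSum p x (occ B x) - penSum p x (occ B' x))
        = ∑ x, (penSum p x (occ B x) - penSum p x (occ B' x)) :=
      Finset.sum_subset (Finset.subset_univ _) hz
    rw [Finset.sum_pair hhl] at hpair
    have gh : penSum p sh (occ B sh) - penSum p sh (occ B' sh) = -(p sh (occ B sh + 1)) := by
      rw [hocch, penSum_succ]; ring
    have gl : penSum p sl (occ B sl) - penSum p sl (occ B' sl) = p sl (occ B sl) := by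
      rw [hoccl, penSum_succ]; ring
    have hsum : ∑ x, (penSum p x (occ B x) - penSum p x (occ B' x))
        = (∑ s, penSum p s (occ B s)) - ∑ s, penSum p s (occ B' s) := Finset.sum_sub_distrib _ _
    rw [gh, gl, hsum] at hpair
    linarith
  have htr := transfer_peel (A := A) (B := B) CM' P.es P.nodE
  rw [cost_eq, cost_eq, pen, htr, ← hB']
  ring

lemma CycData.cost_peel (C : CycData A B) (CM' : E → S → ℤ) (p : S → ℕ → ℤ) :
    cost CM' p B = cost CM' p (peelB A B C.es) + moveCost CM' A B C.es := by
  classical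
  have pen : ∑ s, penSum p s (occ B s) = ∑ s, penSum p s (occ (peelB A B C.es) s) := by
    apply Finset.sum_congr rfl
    intro s _
    rw [C.occ_peel s]
  have htr := transfer_peel (A := A) (B := B) CM' C.es C.nodE
  rw [cost_eq, cost_eq, pen, htr]
  ring

end Peeling2

section Walk

variable {E S : Type*} [Fintype E] [DecidableEq E] [Fintype S] [DecidableEq S]
variable {A B : E → S}

lemma count_step (A B : E → S) (v : S) (h : occ B v ≤ occ A v)
    (hex : (∃ d, B d = v ∧ A d ≠ v) ∨ occ B v < occ A v) :
    ∃ d, A d = v ∧ B d ≠ v := by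
  classical
  by_contra hno
  push_neg at hno
  have hsub : (univ.filter fun d => A d = v) ⊆ (univ.filter fun d => B d = v) := by
    intro d hd
    simp only [Finset.mem_filter, Finset.mem_univ, true_and] at hd ⊢
    exact hno d hd
  rcases hex with ⟨d, hdB, hdA⟩ | hlt
  · have hss : (univ.filter fun d => A d = v) ⊂ (univ.filter fun d => B d = v) := by
      refine ⟨hsub, fun hs => ?_⟩
      have hd : d ∈ (univ.filter fun d => B d = v) := by
        simp only [Finset.mem_filter, Finset.mem_univ, true_and]; exact hdB
      have := hs hd
      simp only [Finset.mem_filter, Finset.mem_univ, true_and] at this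
      exact hdA this
    have := Finset.card_lt_card hss
    rw [occ, occ] at h
    omega
  · have := Finset.card_le_card hsub
    rw [occ, occ] at h hlt
    omega

lemma head_eq_getLast_of_len_one {l : List S} (hne : l ≠ []) (h : l.length = 1) :
    l.head hne = l.getLast hne := by
  rw [List.head_eq_getElem, List.getLast_eq_getElem]
  exact getElem_congr_idx' _ _ _ _ _ (by omega)

lemma walk_step (vs : List S) (ds : List E)
    (hnod : vs.Nodup) (hlen : vs.length = ds.length + 1)
    (hA : ∀ (i : ℕ) (hi : i < ds.length), A (ds[i]'hi) = vs[i]'(by omega))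
    (hB : ∀ (i : ℕ) (hi : i < ds.length), B (ds[i]'hi) = vs[i+1]'(by omega))
    (hne : vs ≠ [])
    (hstart : ds.length = 0 → occ B (vs.head hne) < occ A (vs.head hne)) :
    (∃ P : PathData A B, P.ws.head P.wsne = vs.head hne ∧
      occ A (P.ws.getLast P.wsne) < occ B (P.ws.getLast P.wsne))
    ∨ Nonempty (CycData A B)
    ∨ (∃ d, A d = vs.getLast hne ∧ B d ≠ A d ∧ B d ∉ vs) := by
  classical
  by_cases hsur : occ A (vs.getLast hne) < occ B (vs.getLast hne)
  · -- path output
    left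
    have hdpos : 0 < ds.length := by
      rcases Nat.eq_zero_or_pos ds.length with h0 | h
      · exfalso
        have h1 : vs.length = 1 := by omega
        have := hstart h0
        rw [head_eq_getLast_of_len_one hne h1] at this
        omega
      · exact h
    have hhead : vs.head hne = vs.head hne := rfl
    exact ⟨⟨vs, ds, hlen, hdpos, hnod, hA, hB⟩, rfl, hsur⟩
  · have hocc : occ B (vs.getLast hne) ≤ occ A (vs.getLast hne) := not_lt.mp hsur
    have hex : (∃ d, B d = vs.getLast hne ∧ A d ≠ vs.getLast hne)
        ∨ occ B (vs.getLast hne) < occ A (vs.getLast hne) := by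
      rcases Nat.eq_zero_or_pos ds.length with h0 | hdpos
      · right
        have h1 : vs.length = 1 := by omega
        have := hstart h0
        rw [head_eq_getLast_of_len_one hne h1] at this
        exact this
      · left
        have hk : ds.length - 1 < ds.length := by omega
        refine ⟨ds[ds.length - 1]'hk, ?_, ?_⟩
        · rw [hB _ hk, List.getLast_eq_getElem]
          exact getElem_congr_idx' _ _ _ _ _ (by omega)
        · rw [hA _ hk, List.getLast_eq_getElem]
          intro h
          have := (List.Nodup.getElem_inj_iff hnod).mp h
          omega
    obtain ⟨d, hdA, hdB⟩ := count_step A B _ hocc hex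
    by_cases hw : B d ∈ vs
    · -- build a cycle
      right; left
      obtain ⟨j, hj, hjw⟩ := List.mem_iff_getElem.mp hw
      have hjk : j < ds.length := by
        rcases Nat.lt_or_ge j ds.length with h | h
        · exact h
        · exfalso
          have : vs[j] = vs.getLast hne := by
            rw [List.getLast_eq_getElem]
            exact getElem_congr_idx' _ _ _ _ _ (by omega)
          rw [hjw] at this
          exact hdB this
      have hdroplen : (vs.drop j).length = vs.length - j := List.length_drop ..
      have hdroplen' : (ds.drop j ++ [d]).length = ds.length - j + 1 := by
        simp [List.length_drop]
      refine ⟨⟨vs.drop j, ds.drop j ++ [d], by omega, by omega,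
        (List.drop_sublist j vs).nodup hnod, ?_, ?_⟩⟩
      · intro i hi
        rw [hdroplen'] at hi
        by_cases hik : i < ds.length - j
        · rw [List.getElem_append_left (by simp [List.length_drop]; omega)]
          rw [List.getElem_drop, List.getElem_drop]
          exact hA (j + i) (by omega)
        · have hieq : i = ds.length - j := by omega
          rw [List.getElem_append_right (by simp [List.length_drop]; omega)]
          rw [List.getElem_singleton, hdA]
          rw [List.getLast_eq_getElem, List.getElem_drop]
          exact getElem_congr_idx' _ _ _ _ _ (by omega)
      · intro i hi
        rw [hdroplen'] at hi
        by_cases hik : i < ds.length - j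
        · rw [List.getElem_append_left (by simp [List.length_drop]; omega)]
          rw [List.getElem_drop]
          have h2 := hB (j + i) (by omega)
          rw [h2]
          have hmod : (i + 1) % (vs.drop j).length = i + 1 := by
            rw [hdroplen]
            exact Nat.mod_eq_of_lt (by omega)
          rw [List.getElem_drop]
          exact getElem_congr_idx' _ _ _ _ _ (by omega)
        · have hieq : i = ds.length - j := by omega
          rw [List.getElem_append_right (by simp [List.length_drop]; omega)]
          rw [List.getElem_singleton]
          have hmod : (i + 1) % (vs.drop j).length = 0 := by
            rw [hdroplen]
            have h3 : i + 1 = vs.length - j := by omega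
            rw [h3, Nat.mod_self]
          rw [List.getElem_drop, ← hjw]
          exact (getElem_congr_idx' _ _ _ _ _ (by omega)).symm
    · right; right
      exact ⟨d, hdA, by rw [hdA]; exact hdB, hw⟩

lemma walk_master (A B : E → S) : ∀ (n : ℕ) (vs : List S) (ds : List E)
    (_ : vs.Nodup) (hlen : vs.length = ds.length + 1)
    (_ : ∀ (i : ℕ) (hi : i < ds.length), A (ds[i]'hi) = vs[i]'(by omega))
    (_ : ∀ (i : ℕ) (hi : i < ds.length), B (ds[i]'hi) = vs[i+1]'(by omega))
    (hne : vs ≠ [])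
    (_ : ds.length = 0 → occ B (vs.head hne) < occ A (vs.head hne))
    (_ : Fintype.card S ≤ n + vs.length),
    Nonempty (CycData A B) ∨ ∃ P : PathData A B, P.ws.head P.wsne = vs.head hne ∧
      occ A (P.ws.getLast P.wsne) < occ B (P.ws.getLast P.wsne) := by
  intro n
  induction n with
  | zero =>
    intro vs ds hnod hlen hA hB hne hstart hcard
    rcases walk_step vs ds hnod hlen hA hB hne hstart with ⟨P, h1, h2⟩ | hcyc | ⟨d, _, _, hnotin⟩
    · exact Or.inr ⟨P, h1, h2⟩
    · exact Or.inl hcyc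
    · exfalso
      apply hnotin
      have hlencard : vs.length = Fintype.card S := by
        have := List.Nodup.length_le_card hnod
        omega
      have huniv : vs.toFinset = univ := by
        apply Finset.eq_univ_of_card
        rw [List.toFinset_card_of_nodup hnod]
        exact hlencard
      rw [← List.mem_toFinset, huniv]
      exact Finset.mem_univ _
  | succ n ih =>
    intro vs ds hnod hlen hA hB hne hstart hcard
    rcases walk_step vs ds hnod hlen hA hB hne hstart with ⟨P, h1, h2⟩ | hcyc | ⟨d, hdA, hdBA, hnotin⟩
    · exact Or.inr ⟨P, h1, h2⟩
    · exact Or.inl hcyc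
    · -- extend the walk
      have hne' : vs ++ [B d] ≠ [] := by simp
      have hnod' : (vs ++ [B d]).Nodup := by
        rw [List.nodup_append]
        exact ⟨hnod, List.nodup_singleton _, fun a ha b hb => by rw [List.mem_singleton] at hb; subst hb; exact fun h => hnotin (h ▸ ha)⟩
      have hlen' : (vs ++ [B d]).length = (ds ++ [d]).length + 1 := by
        simp [hlen]
      have hA' : ∀ (i : ℕ) (hi : i < (ds ++ [d]).length),
          A ((ds ++ [d])[i]'hi) = (vs ++ [B d])[i]'(by omega) := by
        intro i hi
        simp only [List.length_append, List.length_singleton] at hi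
        by_cases hik : i < ds.length
        · rw [List.getElem_append_left hik, List.getElem_append_left (by omega)]
          exact hA i hik
        · have : i = ds.length := by omega
          rw [List.getElem_append_right (by omega), List.getElem_singleton,
            List.getElem_append_left (by omega), hdA, List.getLast_eq_getElem]
          exact getElem_congr_idx' _ _ _ _ _ (by omega)
      have hB' : ∀ (i : ℕ) (hi : i < (ds ++ [d]).length),
          B ((ds ++ [d])[i]'hi) = (vs ++ [B d])[i+1]'(by omega) := by
        intro i hi
        simp only [List.length_append, List.length_singleton] at hi
        by_cases hik : i < ds.length
        · rw [List.getElem_append_left hik, List.getElem_append_left (by omega)]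
          exact hB i hik
        · have : i = ds.length := by omega
          rw [List.getElem_append_right (i := i) (by omega), List.getElem_singleton,
            List.getElem_append_right (by omega), List.getElem_singleton]
      have hstart' : (ds ++ [d]).length = 0 →
          occ B ((vs ++ [B d]).head hne') < occ A ((vs ++ [B d]).head hne') := by
        intro h0; simp at h0
      have hcard' : Fintype.card S ≤ n + (vs ++ [B d]).length := by
        simp only [List.length_append, List.length_singleton]
        omega
      rcases ih (vs ++ [B d]) (ds ++ [d]) hnod' hlen' hA' hB' hne' hstart' hcard' with
        hcyc | ⟨P, h1, h2⟩
      · exact Or.inl hcyc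
      · refine Or.inr ⟨P, ?_, h2⟩
        rw [h1]
        rw [List.head_eq_getElem, List.head_eq_getElem]
        exact List.getElem_append_left (by omega)

section Specialized

variable {D S : Type} [Fintype D] [DecidableEq D] [Fintype S] [DecidableEq S]
variable (CM : D → S → ℤ) (c : S → ℕ) (p : S → ℕ → ℤ)

lemma pnonneg (hp0 : ∀ s j, j ≤ c s → p s j = 0) (hppos : ∀ s j, c s < j → 0 < p s j) :
    ∀ s j, 0 ≤ p s j := by
  intro s j
  rcases le_or_gt j (c s) with h | h
  · rw [hp0 s j h]
  · exact le_of_lt (hppos s j h)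

lemma pmono (hp0 : ∀ s j, j ≤ c s → p s j = 0) (hppos : ∀ s j, c s < j → 0 < p s j)
    (hpmono : ∀ s j, c s < j → p s j ≤ p s (j + 1)) :
    ∀ s, Monotone (p s) := by
  intro s
  apply monotone_nat_of_le_succ
  intro j
  rcases le_or_gt j (c s) with h | h
  · rw [hp0 s j h]
    exact pnonneg c p hp0 hppos s (j+1)
  · exact hpmono s j h

lemma CM_diff_ge (d : D) (x y : S) : -(∑ s, |CM d s|) ≤ CM d x - CM d y := by
  by_cases hxy : x = y
  · subst hxy
    simp only [sub_self]
    rw [neg_nonpos]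
    exact Finset.sum_nonneg (fun s _ => abs_nonneg _)
  · have h1 : |CM d x| + |CM d y| = ∑ s ∈ ({x, y} : Finset S), |CM d s| :=
      (Finset.sum_pair (f := fun s => |CM d s|) hxy).symm
    have h2 : ∑ s ∈ ({x, y} : Finset S), |CM d s| ≤ ∑ s, |CM d s| :=
      Finset.sum_le_sum_of_subset_of_nonneg (Finset.subset_univ _)
        (fun s _ _ => abs_nonneg _)
    have h3 : -(|CM d x| + |CM d y|) ≤ CM d x - CM d y := by
      have := abs_nonneg (CM d x)
      have := abs_nonneg (CM d y)
      have := neg_abs_le (CM d x)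
      have := le_abs_self (CM d y)
      linarith
    linarith

lemma sum_CM_bound {ι : Type*} (T : Finset ι) (dm : ι → D) (hinj : Set.InjOn dm T)
    (v1 v2 : ι → S) :
    -(∑ d, ∑ s, |CM d s|) ≤ ∑ t ∈ T, (CM (dm t) (v1 t) - CM (dm t) (v2 t)) := by
  have h1 : ∀ t ∈ T, -(∑ s, |CM (dm t) s|) ≤ CM (dm t) (v1 t) - CM (dm t) (v2 t) :=
    fun t _ => CM_diff_ge CM (dm t) (v1 t) (v2 t)
  have h2 : ∑ t ∈ T, -(∑ s, |CM (dm t) s|) ≤ ∑ t ∈ T, (CM (dm t) (v1 t) - CM (dm t) (v2 t)) :=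
    Finset.sum_le_sum h1
  have h3 : ∑ t ∈ T, -(∑ s, |CM (dm t) s|) = -(∑ d ∈ T.image dm, ∑ s, |CM d s|) := by
    rw [← Finset.sum_neg_distrib]
    rw [Finset.sum_image (fun a ha b hb h => hinj ha hb h)]
  have h4 : ∑ d ∈ T.image dm, ∑ s, |CM d s| ≤ ∑ d, ∑ s, |CM d s| :=
    Finset.sum_le_sum_of_subset_of_nonneg (Finset.subset_univ _)
      (fun d _ _ => Finset.sum_nonneg (fun s _ => abs_nonneg _))
  linarith

lemma penSum_nonneg' (hnn : ∀ s j, 0 ≤ p s j) (s : S) (n : ℕ) : 0 ≤ penSum p s n :=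
  Finset.sum_nonneg (fun j _ => hnn s j)

lemma penSum_le_abs (s : S) (n N : ℕ) (h : n ≤ N) :
    penSum p s n ≤ ∑ j ∈ Finset.Icc 1 N, |p s j| := by
  calc penSum p s n ≤ ∑ j ∈ Finset.Icc 1 n, |p s j| :=
        Finset.sum_le_sum (fun j _ => le_abs_self _)
    _ ≤ ∑ j ∈ Finset.Icc 1 N, |p s j| :=
        Finset.sum_le_sum_of_subset_of_nonneg
          (Finset.Icc_subset_Icc_right h) (fun j _ _ => abs_nonneg _)

lemma p_single_le (hp0 : ∀ s j, j ≤ c s → p s j = 0) (hppos : ∀ s j, c s < j → 0 < p s j)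
    (s : S) (n N : ℕ) (h : n ≤ N) :
    p s n ≤ ∑ s', ∑ j ∈ Finset.Icc 1 N, |p s' j| := by
  have hnn : ∀ s' j, (0:ℤ) ≤ |p s' j| := fun _ _ => abs_nonneg _
  have hsum_nonneg : ∀ s', (0:ℤ) ≤ ∑ j ∈ Finset.Icc 1 N, |p s' j| :=
    fun s' => Finset.sum_nonneg (fun j _ => hnn s' j)
  rcases Nat.eq_zero_or_pos n with h0 | hpos
  · rw [h0, hp0 s 0 (Nat.zero_le _)]
    exact Finset.sum_nonneg (fun s' _ => hsum_nonneg s')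
  · have h1 : p s n ≤ |p s n| := le_abs_self _
    have h2 : |p s n| ≤ ∑ j ∈ Finset.Icc 1 N, |p s j| :=
      Finset.single_le_sum (fun j _ => hnn s j) (Finset.mem_Icc.mpr ⟨hpos, h⟩)
    have h3 : ∑ j ∈ Finset.Icc 1 N, |p s j| ≤ ∑ s', ∑ j ∈ Finset.Icc 1 N, |p s' j| :=
      Finset.single_le_sum (fun s' _ => hsum_nonneg s') (Finset.mem_univ s)
    linarith

variable (A1 : D → S) (sj : S) (A2 : Option D → S)

lemma occ_A2_eq (hA2s : ∀ d, A2 (some d) = A1 d) (hA2n : A2 none = sj) (s : S) :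
    occ A2 s = occ A1 s + (if sj = s then 1 else 0) := by
  rw [occ_eq_sum, occ_eq_sum, Fintype.sum_option]
  simp only [hA2s, hA2n]
  omega

lemma occ_le_card (X : Option D → S) (s : S) : occ X s ≤ Fintype.card D + 1 := by
  rw [occ]
  calc (univ.filter fun o => X o = s).card ≤ (univ : Finset (Option D)).card :=
        Finset.card_filter_le _ _
    _ = Fintype.card D + 1 := by rw [Finset.card_univ, Fintype.card_option]

lemma occ_A1_le (hA2s : ∀ d, A2 (some d) = A1 d) (hA2n : A2 none = sj) (s : S) :
    occ A1 s ≤ occ A2 s := by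
  rw [occ_A2_eq A1 sj A2 hA2s hA2n s]
  omega

end Specialized

section ClosingLemma

variable {E S : Type*} [Fintype E] [DecidableEq E] [Fintype S] [DecidableEq S]
variable {A B : E → S}

lemma PathData.closing (P : PathData A B) :
    ∃ t, P.loop.dem t = none ∧ P.loop.vtx (cnext t) = P.ws.head P.wsne := by
  have hm : P.loop.m = P.es.length + 1 := P.hlen
  have hval : ((finCongr hm.symm (Fin.last P.es.length) : Fin P.loop.m) : ℕ) = P.es.length := rfl
  refine ⟨finCongr hm.symm (Fin.last P.es.length), P.loop_dem_ge (by omega), ?_⟩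
  have hcn : (cnext (finCongr hm.symm (Fin.last P.es.length)) : ℕ) = 0 := by
    show (P.es.length + 1) % P.loop.m = 0
    rw [hm]
    simp
  rw [PathData.loop_vtx, List.get_eq_getElem, List.head_eq_getElem]
  exact getElem_congr_idx' _ _ _ _ _ hcn

end ClosingLemma

section Classify

variable {D S : Type} [Fintype D] [DecidableEq D] [Fintype S] [DecidableEq S]
variable {CM : D → S → ℤ} {c : S → ℕ} {p : S → ℕ → ℤ}
variable {A1 : D → S} {sj : S} {M : ℤ} {CM2 : Option D → S → ℤ} {A2 : Option D → S}

lemma dstar_loop_nonneg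
    (hp0 : ∀ s j, j ≤ c s → p s j = 0) (hppos : ∀ s j, c s < j → 0 < p s j)
    (hM : M = 1 + (∑ d, ∑ s, |CM d s|) +
        ∑ s, ∑ j ∈ Finset.Icc 1 (Fintype.card D + 1), |p s j|)
    (hCM2s : ∀ d s, CM2 (some d) s = CM d s)
    (hCM2j : CM2 none sj = 0)
    (hCM2o : ∀ s, s ≠ sj → CM2 none s = M)
    (hA2n : A2 none = sj)
    (L : Loop S (Option D)) (hL : IsLoop A2 L) (hst : ∃ t, L.dem t = some none) :
    0 ≤ loopCost CM2 p A2 L := by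
  classical
  obtain ⟨hm2, hinj, h3, h4, h5⟩ := hL
  obtain ⟨ts, hts⟩ := hst
  haveI : NeZero L.m := ⟨by omega⟩
  have hvts : L.vtx ts = sj := (h3 ts none hts).symm.trans hA2n
  have hnecn : L.vtx (cnext ts) ≠ sj := by
    intro h
    exact cnext_ne hm2 ts (hinj (h.trans hvts.symm))
  have hwts : edgeWt CM2 p A2 L ts = M := by
    rw [edgeWt_some CM2 p A2 hts, hvts, hCM2j, hCM2o _ hnecn]
    ring
  rw [loopCost, ← Finset.sum_erase_add univ _ (Finset.mem_univ ts), hwts]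
  set T2 := univ.erase ts with hT2
  set Ts := T2.filter (fun t => (L.dem t).isSome) with hTs
  set Tn := T2.filter (fun t => ¬ (L.dem t).isSome) with hTn
  have hsplit : ∑ t ∈ T2, edgeWt CM2 p A2 L t
      = (∑ t ∈ Ts, edgeWt CM2 p A2 L t) + ∑ t ∈ Tn, edgeWt CM2 p A2 L t :=
    (Finset.sum_filter_add_sum_filter_not T2 _ _).symm
  have hTsdem : ∀ t ∈ Ts, ∃ d : D, L.dem t = some (some d) := by
    intro t ht
    rw [hTs, Finset.mem_filter, hT2, Finset.mem_erase] at ht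
    rcases hd : L.dem t with _ | o
    · rw [hd] at ht; simp at ht
    · rcases o with _ | d
      · exact absurd (h4 t ts none hd hts) ht.1.1
      · exact ⟨d, rfl⟩
  have hCMnn : (0:ℤ) ≤ ∑ d, ∑ s, |CM d s| :=
    Finset.sum_nonneg (fun d _ => Finset.sum_nonneg (fun s _ => abs_nonneg _))
  have hpnn : (0:ℤ) ≤ ∑ s, ∑ j ∈ Finset.Icc 1 (Fintype.card D + 1), |p s j| :=
    Finset.sum_nonneg (fun s _ => Finset.sum_nonneg (fun j _ => abs_nonneg _))
  have hTsbound : -(∑ d, ∑ s, |CM d s|) ≤ ∑ t ∈ Ts, edgeWt CM2 p A2 L t := by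
    rcases Finset.eq_empty_or_nonempty Ts with hE | ⟨t0, ht0⟩
    · rw [hE, Finset.sum_empty]
      linarith
    · obtain ⟨d0, hd0⟩ := hTsdem t0 ht0
      set dm : Fin L.m → D := fun t => (((L.dem t).getD (some d0)).getD d0) with hdm
      have hdmspec : ∀ t ∈ Ts, L.dem t = some (some (dm t)) := by
        intro t ht
        obtain ⟨d, hd⟩ := hTsdem t ht
        have : dm t = d := by simp [hdm, hd]
        rw [this, hd]
      have hinjOn : Set.InjOn dm Ts := by
        intro a ha b hb hab
        exact h4 a b _ (by rw [hdmspec a ha, hab]) (hdmspec b hb)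
      have heq : ∑ t ∈ Ts, edgeWt CM2 p A2 L t
          = ∑ t ∈ Ts, (CM (dm t) (L.vtx (cnext t)) - CM (dm t) (L.vtx t)) := by
        apply Finset.sum_congr rfl
        intro t ht
        rw [edgeWt_some CM2 p A2 (hdmspec t ht), hCM2s, hCM2s]
      rw [heq]
      exact sum_CM_bound CM Ts dm hinjOn _ _
  have hTnbound : -(∑ s, ∑ j ∈ Finset.Icc 1 (Fintype.card D + 1), |p s j|)
      ≤ ∑ t ∈ Tn, edgeWt CM2 p A2 L t := by
    rcases Finset.eq_empty_or_nonempty Tn with hE | ⟨t1, ht1⟩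
    · rw [hE, Finset.sum_empty]
      linarith
    · have hd1 : L.dem t1 = none := by
        rw [hTn, Finset.mem_filter] at ht1
        exact Option.not_isSome_iff_eq_none.mp ht1.2
      have hTn1 : Tn = {t1} := by
        apply Finset.eq_singleton_iff_unique_mem.mpr
        refine ⟨ht1, fun x hx => ?_⟩
        rw [hTn, Finset.mem_filter] at hx
        exact h5 x t1 (Option.not_isSome_iff_eq_none.mp hx.2) hd1
      rw [hTn1, Finset.sum_singleton, edgeWt_none CM2 p A2 hd1, wpen]
      have h1 : 0 ≤ p (L.vtx t1) (occ A2 (L.vtx t1) + 1) := pnonneg c p hp0 hppos _ _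
      have h2 : p (L.vtx (cnext t1)) (occ A2 (L.vtx (cnext t1)))
          ≤ ∑ s, ∑ j ∈ Finset.Icc 1 (Fintype.card D + 1), |p s j| :=
        p_single_le c p hp0 hppos _ _ _ (occ_le_card A2 _)
      linarith
  rw [hsplit]
  rw [hM]
  linarith

lemma lift_loop_nonneg
    (pm : ∀ s, Monotone (p s))
    (hA1 : ¬ InducesNegLoop CM p A1)
    (hCM2s : ∀ d s, CM2 (some d) s = CM d s)
    (hA2s : ∀ d, A2 (some d) = A1 d)
    (hA2n : A2 none = sj)
    (L : Loop S (Option D)) (hL : IsLoop A2 L)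
    (hnd : ∀ t, L.dem t ≠ some none)
    (hncl : ∀ t, L.dem t = none → L.vtx (cnext t) ≠ sj) :
    0 ≤ loopCost CM2 p A2 L := by
  classical
  obtain ⟨hm2, hinj, h3, h4, h5⟩ := hL
  set L1 : Loop S D := ⟨L.m, L.vtx, fun t => (L.dem t).bind id⟩ with hL1
  have hcases : ∀ t : Fin L.m, (L.dem t = none ∧ L1.dem t = none)
      ∨ (∃ d : D, L.dem t = some (some d) ∧ L1.dem t = some d) := by
    intro t
    rcases hd : L.dem t with _ | o
    · left; exact ⟨rfl, by show (L.dem t).bind id = none; rw [hd]; rfl⟩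
    · rcases o with _ | d
      · exact absurd hd (hnd t)
      · right; exact ⟨d, rfl, by show (L.dem t).bind id = some d; rw [hd]; rfl⟩
  have hisloop : IsLoop A1 L1 := by
    refine ⟨hm2, hinj, ?_, ?_, ?_⟩
    · intro t d h1
      rcases hcases t with ⟨_, h2⟩ | ⟨d', hd', h2⟩
      · rw [h1] at h2; cases h2
      · rw [h1] at h2
        have : d' = d := Option.some_inj.mp h2.symm
        subst this
        rw [← hA2s]
        exact h3 t (some d') hd'
    · intro t t' d h1 h1'
      rcases hcases t with ⟨_, h2⟩ | ⟨d1, hd1, h2⟩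
      · rw [h1] at h2; cases h2
      · rcases hcases t' with ⟨_, h2'⟩ | ⟨d2, hd2, h2'⟩
        · rw [h1'] at h2'; cases h2'
        · rw [h1] at h2; rw [h1'] at h2'
          have e1 : d1 = d := Option.some_inj.mp h2.symm
          have e2 : d2 = d := Option.some_inj.mp h2'.symm
          rw [e1] at hd1; rw [e2] at hd2
          exact h4 t t' (some d) hd1 hd2
    · intro t t' h1 h1'
      have e1 : L.dem t = none := by
        rcases hcases t with ⟨h2, _⟩ | ⟨d, _, h2⟩
        · exact h2
        · rw [h1] at h2; cases h2
      have e2 : L.dem t' = none := by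
        rcases hcases t' with ⟨h2, _⟩ | ⟨d, _, h2⟩
        · exact h2
        · rw [h1'] at h2; cases h2
      exact h5 t t' e1 e2
  have hpt : ∀ t, edgeWt CM p A1 L1 t ≤ edgeWt CM2 p A2 L t := by
    intro t
    rcases hcases t with ⟨h2, h2'⟩ | ⟨d, h2, h2'⟩
    · rw [edgeWt_none CM p A1 h2', edgeWt_none CM2 p A2 h2]
      have hvtx : L1.vtx = L.vtx := rfl
      rw [hvtx]
      have hb : L.vtx (cnext t) ≠ sj := hncl t h2
      rw [wpen, wpen]
      have hoccb : occ A2 (L.vtx (cnext t)) = occ A1 (L.vtx (cnext t)) := by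
        rw [occ_A2_eq A1 sj A2 hA2s hA2n, if_neg (fun h => hb h.symm)]
        omega
      have hocca : occ A1 (L.vtx t) + 1 ≤ occ A2 (L.vtx t) + 1 := by
        have := occ_A1_le A1 sj A2 hA2s hA2n (L.vtx t)
        omega
      have := pm (L.vtx t) hocca
      rw [hoccb]
      linarith
    · rw [edgeWt_some CM p A1 h2', edgeWt_some CM2 p A2 h2, hCM2s, hCM2s]
  have hA1' : 0 ≤ loopCost CM p A1 L1 := by
    by_contra hlt
    exact hA1 ⟨L1, hisloop, not_le.mp hlt⟩
  calc (0:ℤ) ≤ loopCost CM p A1 L1 := hA1'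
    _ ≤ loopCost CM2 p A2 L := Finset.sum_le_sum (fun t _ => hpt t)

lemma far_cost_bound
    (hp0 : ∀ s j, j ≤ c s → p s j = 0) (hppos : ∀ s j, c s < j → 0 < p s j)
    (hM : M = 1 + (∑ d, ∑ s, |CM d s|) +
        ∑ s, ∑ j ∈ Finset.Icc 1 (Fintype.card D + 1), |p s j|)
    (hCM2s : ∀ d s, CM2 (some d) s = CM d s)
    (hCM2j : CM2 none sj = 0)
    (hCM2o : ∀ s, s ≠ sj → CM2 none s = M)
    (hA2s : ∀ d, A2 (some d) = A1 d)
    (hA2n : A2 none = sj)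
    (B2 : Option D → S) (hB2 : B2 none ≠ sj) :
    cost CM2 p A2 + 1 ≤ cost CM2 p B2 := by
  classical
  have htr : (∑ o, CM2 o (A2 o)) + M - (∑ d, ∑ s, |CM d s|) ≤ ∑ o, CM2 o (B2 o) := by
    rw [Fintype.sum_option, Fintype.sum_option]
    have h1 : CM2 none (A2 none) = 0 := by rw [hA2n, hCM2j]
    have h2 : CM2 none (B2 none) = M := hCM2o _ hB2
    have h3 : ∑ d, (CM2 (some d) (B2 (some d)) - CM2 (some d) (A2 (some d)))
        ≥ -(∑ d, ∑ s, |CM d s|) := by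
      have hterm : ∀ d : D, -(∑ s, |CM d s|) ≤ CM2 (some d) (B2 (some d)) - CM2 (some d) (A2 (some d)) := by
        intro d
        rw [hCM2s, hCM2s]
        exact CM_diff_ge CM d _ _
      calc -(∑ d, ∑ s, |CM d s|) = ∑ d, -(∑ s, |CM d s|) := by rw [Finset.sum_neg_distrib]
        _ ≤ _ := Finset.sum_le_sum (fun d _ => hterm d)
    have h4 : ∑ d, (CM2 (some d) (B2 (some d)) - CM2 (some d) (A2 (some d)))
        = (∑ d, CM2 (some d) (B2 (some d))) - ∑ d, CM2 (some d) (A2 (some d)) :=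
      Finset.sum_sub_distrib _ _
    rw [h1, h2]
    linarith
  have hpenB : 0 ≤ ∑ s, penSum p s (occ B2 s) :=
    Finset.sum_nonneg (fun s _ => penSum_nonneg' p (pnonneg c p hp0 hppos) s _)
  have hpenA : ∑ s, penSum p s (occ A2 s)
      ≤ ∑ s, ∑ j ∈ Finset.Icc 1 (Fintype.card D + 1), |p s j| :=
    Finset.sum_le_sum (fun s _ => penSum_le_abs p s _ _ (occ_le_card A2 s))
  rw [cost_eq, cost_eq]
  rw [hM] at htr
  linarith

end Classify

section Convert

lemma sum_occ_eq_card {E S : Type*} [Fintype E] [DecidableEq E] [Fintype S] [DecidableEq S]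
    (X : E → S) : ∑ s, occ X s = Fintype.card E := by
  simp_rw [occ_eq_sum]
  rw [Finset.sum_comm]
  have h1 : ∀ e : E, (∑ s, if X e = s then (1:ℕ) else 0) = 1 := by
    intro e
    rw [Finset.sum_ite_eq univ (X e) (fun _ => (1:ℕ))]
    simp
  rw [Finset.sum_congr rfl (fun e _ => h1 e)]
  simp [Finset.card_univ]

variable {D S : Type} [Fintype D] [DecidableEq D] [Fintype S] [DecidableEq S]
variable {CM : D → S → ℤ} {p : S → ℕ → ℤ}
variable {A1 : D → S} {sj : S} {CM2 : Option D → S → ℤ} {A2 : Option D → S}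
variable {B : Option D → S}

lemma map_getD_spec (es : List (Option D)) (d0 : D) (h : ∀ e ∈ es, e ≠ none)
    (i : ℕ) (hi : i < es.length) :
    es[i]'hi = some ((es.map (fun o => o.getD d0))[i]'(by simpa using hi)) := by
  have hmem : es[i]'hi ∈ es := List.getElem_mem _
  rcases he : es[i]'hi with _ | d
  · exact absurd he (h _ hmem)
  · simp [List.getElem_map, he]

lemma ne_none_of_BneA (hA2n : A2 none = sj) (hBn : B none = sj)
    {es : List (Option D)} (hBA : ∀ e ∈ es, B e ≠ A2 e) : ∀ e ∈ es, e ≠ none := by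
  intro e he hn
  subst hn
  exact hBA none he (by rw [hBn, hA2n])

lemma moveCost_map (hCM2s : ∀ d s, CM2 (some d) s = CM d s)
    (hA2s : ∀ d, A2 (some d) = A1 d)
    (es : List (Option D)) (d0 : D) (h : ∀ e ∈ es, e ≠ none) :
    moveCost CM A1 (fun d => B (some d)) (es.map (fun o => o.getD d0))
      = moveCost CM2 A2 B es := by
  rw [moveCost, moveCost]
  have hl : (es.map (fun o => o.getD d0)).length = es.length := by simp
  rw [← Equiv.sum_comp (finCongr hl.symm)
    (fun i => CM ((es.map (fun o => o.getD d0)).get i) (B (some ((es.map (fun o => o.getD d0)).get i)))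
      - CM ((es.map (fun o => o.getD d0)).get i) (A1 ((es.map (fun o => o.getD d0)).get i)))]
  apply Finset.sum_congr rfl
  intro i _
  have hi : (i : ℕ) < es.length := i.isLt
  have hspec := map_getD_spec es d0 h i hi
  have hget1 : (es.map (fun o => o.getD d0)).get (finCongr hl.symm i)
      = (es.map (fun o => o.getD d0))[(i:ℕ)]'(by simpa using hi) := by
    rw [List.get_eq_getElem]
    exact getElem_congr_idx' _ _ _ _ _ rfl
  have hget2 : es.get i = es[(i:ℕ)]'hi := by rw [List.get_eq_getElem]
  rw [hget1, hget2, hspec, hCM2s, hCM2s, hA2s]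

lemma cyc_to_D (hCM2s : ∀ d s, CM2 (some d) s = CM d s)
    (hA2s : ∀ d, A2 (some d) = A1 d) (hA2n : A2 none = sj) (hBn : B none = sj)
    (C : CycData A2 B) :
    ∃ C1 : CycData A1 (fun d => B (some d)),
      loopCost CM p A1 C1.loop = moveCost CM2 A2 B C.es := by
  classical
  have hnn : ∀ e ∈ C.es, e ≠ none := ne_none_of_BneA hA2n hBn C.BneA
  have hesne : C.es ≠ [] := by
    have := C.hpos; intro h; rw [h] at this; simp at this
  have h0 : 0 < C.es.length := by have := C.hpos; omega
  obtain ⟨d0, hd0⟩ : ∃ d0 : D, C.es[0]'h0 = some d0 := by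
    rcases he : C.es[0]'h0 with _ | d
    · exact absurd he (hnn _ (List.getElem_mem _))
    · exact ⟨d, rfl⟩
  set esD := C.es.map (fun o => o.getD d0) with hesD
  have hlD : esD.length = C.es.length := by simp [hesD]
  refine ⟨⟨C.ws, esD, by rw [hlD]; exact C.hlen, by rw [hlD]; exact C.hpos, C.hnodW, ?_, ?_⟩, ?_⟩
  · intro i hi
    rw [hlD] at hi
    have hspec := map_getD_spec C.es d0 hnn i hi
    have := C.hA i hi
    rw [hspec, hA2s] at this
    exact this
  · intro i hi
    rw [hlD] at hi
    have hspec := map_getD_spec C.es d0 hnn i hi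
    have := C.hB i hi
    rw [hspec] at this
    exact this
  · rw [CycData.loopCost_eq]
    exact moveCost_map hCM2s hA2s C.es d0 hnn

lemma path_to_D (hCM2s : ∀ d s, CM2 (some d) s = CM d s)
    (hA2s : ∀ d, A2 (some d) = A1 d) (hA2n : A2 none = sj) (hBn : B none = sj)
    (P : PathData A2 B) :
    ∃ P1 : PathData A1 (fun d => B (some d)),
      IsLoop A1 P1.loop ∧
      loopCost CM p A1 P1.loop = moveCost CM2 A2 B P.es
        + wpen p A1 (P.ws.getLast P.wsne) (P.ws.head P.wsne) := by
  classical
  have hnn : ∀ e ∈ P.es, e ≠ none := ne_none_of_BneA hA2n hBn P.BneA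
  have h0 : 0 < P.es.length := P.hpos
  obtain ⟨d0, hd0⟩ : ∃ d0 : D, P.es[0]'h0 = some d0 := by
    rcases he : P.es[0]'h0 with _ | d
    · exact absurd he (hnn _ (List.getElem_mem _))
    · exact ⟨d, rfl⟩
  set esD := P.es.map (fun o => o.getD d0) with hesD
  have hlD : esD.length = P.es.length := by simp [hesD]
  refine ⟨⟨P.ws, esD, by rw [hlD]; exact P.hlen, by rw [hlD]; exact P.hpos, P.hnodW, ?_, ?_⟩,
    ?_, ?_⟩
  · intro i hi
    rw [hlD] at hi
    have hspec := map_getD_spec P.es d0 hnn i hi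
    have := P.hA i hi
    rw [hspec, hA2s] at this
    exact this
  · intro i hi
    rw [hlD] at hi
    have hspec := map_getD_spec P.es d0 hnn i hi
    have := P.hB i hi
    rw [hspec] at this
    exact this
  · exact PathData.isLoop _
  · rw [PathData.loopCost_eq]
    congr 1
    exact moveCost_map hCM2s hA2s P.es d0 hnn

end Convert

section LemStar

variable {D S : Type} [Fintype D] [DecidableEq D] [Fintype S] [DecidableEq S]
variable {CM : D → S → ℤ} {c : S → ℕ} {p : S → ℕ → ℤ}
variable {A1 : D → S} {sj : S} {CM2 : Option D → S → ℤ} {A2 : Option D → S}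

lemma lemstar
    (hp0 : ∀ s j, j ≤ c s → p s j = 0) (hppos : ∀ s j, c s < j → 0 < p s j)
    (hpmono : ∀ s j, c s < j → p s j ≤ p s (j + 1))
    (hA1 : ¬ InducesNegLoop CM p A1)
    (hCM2s : ∀ d s, CM2 (some d) s = CM d s)
    (hA2s : ∀ d, A2 (some d) = A1 d)
    (hA2n : A2 none = sj)
    (Cmin : Loop S (Option D))
    (hCminmin : ∀ L, IsLoop A2 L → (∃ t, L.dem t = none ∧ L.vtx (cnext t) = sj) →
      loopCost CM2 p A2 Cmin ≤ loopCost CM2 p A2 L) :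
    ∀ (n : ℕ) (B : Option D → S), B none = sj →
      (univ.filter fun o => B o ≠ A2 o).card ≤ n →
      cost CM2 p A2 + (if occ B sj < occ A2 sj then loopCost CM2 p A2 Cmin else 0)
        ≤ cost CM2 p B := by
  have pm : ∀ s, Monotone (p s) := pmono c p hp0 hppos hpmono
  intro n
  induction n with
  | zero =>
    intro B hBn hcard
    have hempty : (univ.filter fun o => B o ≠ A2 o) = ∅ :=
      Finset.card_eq_zero.mp (Nat.le_antisymm hcard (Nat.zero_le _))
    have hBA : B = A2 := by
      funext o
      by_contra hne
      have : o ∈ (univ.filter fun o => B o ≠ A2 o) := by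
        simp only [Finset.mem_filter, Finset.mem_univ, true_and]; exact hne
      rw [hempty] at this
      simp at this
    rw [hBA, if_neg (lt_irrefl _)]
    simp
  | succ n ih =>
    intro B hBn hcard
    by_cases hBA : B = A2
    · rw [hBA, if_neg (lt_irrefl _)]
      simp
    · have hnone_eq : B none = A2 none := by rw [hBn, hA2n]
      -- cycle handler
      have docycle : ∀ _ : CycData A2 B,
          cost CM2 p A2 + (if occ B sj < occ A2 sj then loopCost CM2 p A2 Cmin else 0)
            ≤ cost CM2 p B := by
        intro C
        set B' := peelB A2 B C.es with hB'
        have hBAe : ∀ e ∈ C.es, B e ≠ A2 e := C.BneA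
        have hnn : ∀ e ∈ C.es, e ≠ none := ne_none_of_BneA hA2n hBn hBAe
        have hesne : C.es ≠ [] := by
          have := C.hpos; intro h; rw [h] at this; simp at this
        have hcost := C.cost_peel CM2 p
        rw [← hB'] at hcost
        obtain ⟨C1, hmv⟩ := cyc_to_D (CM := CM) (p := p) hCM2s hA2s hA2n hBn C
        have hmv0 : 0 ≤ moveCost CM2 A2 B C.es := by
          rw [← hmv]
          by_contra hlt
          exact hA1 ⟨C1.loop, C1.isLoop, not_le.mp hlt⟩
        have hBn' : B' none = sj := by
          rw [hB', peelB_not_mem (fun h => hnn none h rfl)]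
          exact hBn
        have hcard' : (univ.filter fun o => B' o ≠ A2 o).card ≤ n := by
          have := Finset.card_lt_card (peel_diff_ssubset C.es hesne hBAe)
          rw [← hB'] at this
          omega
        have hih := ih B' hBn' hcard'
        have hocc : occ B' sj = occ B sj := by
          rw [hB']; exact C.occ_peel sj
        rw [hocc] at hih
        linarith
      -- mode selection
      have hdef_or : (∃ s, occ B s < occ A2 s) ∨ (∀ s, occ B s = occ A2 s) := by
        by_cases h : ∀ s, occ B s = occ A2 s
        · right; exact h
        · left
          push_neg at h
          obtain ⟨s1, hs1⟩ := h
          by_contra hno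
          push_neg at hno
          have hsum : ∑ s, occ B s = ∑ s, occ A2 s := by
            rw [sum_occ_eq_card, sum_occ_eq_card]
          have hlt : ∑ s, occ A2 s < ∑ s, occ B s :=
            Finset.sum_lt_sum (fun s _ => hno s)
              ⟨s1, Finset.mem_univ s1, lt_of_le_of_ne (hno s1) (fun h => hs1 h.symm)⟩
          omega
      rcases hdef_or with ⟨sdef, hsdef⟩ | halleq
      · -- deficit mode
        set s0 := if occ B sj < occ A2 sj then sj else sdef with hs0
        have hs0def : occ B s0 < occ A2 s0 := by
          rw [hs0]; split
          · next h => exact h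
          · exact hsdef
        have hwne : ([s0] : List S) ≠ [] := by simp
        rcases walk_master A2 B (Fintype.card S) [s0] [] (List.nodup_singleton s0)
          (by simp) (by intro i hi; simp at hi) (by intro i hi; simp at hi) hwne
          (by intro _; rw [List.head_cons]; exact hs0def)
          (by simp) with hcycN | ⟨P, hh, hsur⟩
        · obtain ⟨C⟩ := hcycN
          exact docycle C
        · rw [List.head_cons] at hh
          set sh := P.ws.head P.wsne with hsh
          set sl := P.ws.getLast P.wsne with hsl
          have hshs0 : sh = s0 := hh
          have hhl : sh ≠ sl := P.head_ne_last
          set B' := peelB A2 B P.es with hB'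
          have hBAe : ∀ e ∈ P.es, B e ≠ A2 e := P.BneA
          have hnn : ∀ e ∈ P.es, e ≠ none := ne_none_of_BneA hA2n hBn hBAe
          have hesne : P.es ≠ [] := by
            have := P.hpos; intro h; rw [h] at this; simp at this
          have hcost := P.cost_peel CM2 p
          rw [← hB', ← hsh, ← hsl] at hcost
          have hBn' : B' none = sj := by
            rw [hB', peelB_not_mem (fun h => hnn none h rfl)]
            exact hBn
          have hcard' : (univ.filter fun o => B' o ≠ A2 o).card ≤ n := by
            have := Finset.card_lt_card (peel_diff_ssubset P.es hesne hBAe)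
            rw [← hB'] at this
            omega
          have hoccsj := P.occ_peel sj
          rw [← hB', ← hsh, ← hsl] at hoccsj
          obtain ⟨P1, hP1loop, hP1cost⟩ :=
            path_to_D (CM := CM) (p := p) hCM2s hA2s hA2n hBn P
          rw [← hsh, ← hsl] at hP1cost
          have hA1nn : 0 ≤ loopCost CM p A1 P1.loop := by
            by_contra hlt
            exact hA1 ⟨P1.loop, hP1loop, not_le.mp hlt⟩
          have hPcost := P.loopCost_eq CM2 p
          rw [← hsh, ← hsl] at hPcost
          have hoccA2sj : occ A2 sj = occ A1 sj + 1 := by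
            rw [occ_A2_eq A1 sj A2 hA2s hA2n, if_pos rfl]
          have hoccA1le : ∀ s, occ A1 s ≤ occ A2 s := occ_A1_le A1 sj A2 hA2s hA2n
          have hsurl : occ A2 sl + 1 ≤ occ B sl := hsur
          have hih := ih B' hBn' hcard'
          by_cases hshj : sh = sj
          · rw [hshj] at hcost hoccsj hP1cost hPcost
            have hsjs0 : sj = s0 := by rw [← hshj, hshs0]
            have hdefsj : occ B sj < occ A2 sj := by rw [hsjs0]; exact hs0def
            rw [if_pos hdefsj]
            have hslj : sl ≠ sj := fun h => hhl (by rw [hshj, h])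
            rw [if_neg hslj, if_pos rfl] at hoccsj
            have hocceq : occ B' sj = occ B sj + 1 := by omega
            by_cases hdeep : occ B sj + 1 = occ A2 sj
            · have hclose : ∃ t, P.loop.dem t = none ∧ P.loop.vtx (cnext t) = sj := by
                obtain ⟨t, h1, h2⟩ := P.closing
                exact ⟨t, h1, by rw [h2, ← hsh, hshj]⟩
              have hcl2 := hCminmin P.loop P.isLoop hclose
              rw [wpen] at hPcost
              have e1 : p sl (occ A2 sl + 1) ≤ p sl (occ B sl) := pm sl hsurl
              have e2 : p sj (occ B sj + 1) = p sj (occ A2 sj) := by rw [hdeep]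
              rw [if_neg (by rw [hocceq, hdeep]; exact lt_irrefl _)] at hih
              linarith
            · rw [wpen] at hP1cost
              have hsl2 : occ A1 sl + 1 ≤ occ B sl := by
                have := hoccA1le sl; omega
              have e1 : p sl (occ A1 sl + 1) ≤ p sl (occ B sl) := pm sl hsl2
              have e2 : p sj (occ B sj + 1) ≤ p sj (occ A1 sj) := pm sj (by omega)
              rw [if_pos (by omega)] at hih
              linarith
          · have hnd : ¬ (occ B sj < occ A2 sj) := by
              intro h
              apply hshj
              rw [hshs0, hs0, if_pos h]
            rw [if_neg hnd]
            rw [if_neg hshj] at hoccsj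
            have hnd' : ¬ (occ B' sj < occ A2 sj) := by
              by_cases hslj : sl = sj
              · rw [if_pos hslj] at hoccsj
                have : occ A2 sj < occ B sj := by rw [← hslj]; exact hsur
                omega
              · rw [if_neg hslj] at hoccsj
                omega
            rw [if_neg hnd'] at hih
            rw [wpen] at hP1cost
            have hsl2 : occ A1 sl + 1 ≤ occ B sl := by
              have := hoccA1le sl; omega
            have e1 : p sl (occ A1 sl + 1) ≤ p sl (occ B sl) := pm sl hsl2
            have hshA2 : occ A2 sh = occ A1 sh := by
              rw [occ_A2_eq A1 sj A2 hA2s hA2n, if_neg (fun h : sj = sh => hshj h.symm)]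
              omega
            have e2 : p sh (occ B sh + 1) ≤ p sh (occ A1 sh) := by
              apply pm sh
              have h1 : occ B sh < occ A2 sh := by rw [hshs0]; exact hs0def
              omega
            linarith
      · -- all occupancies equal: only cycles can occur
        obtain ⟨o0, ho0⟩ := Function.ne_iff.mp hBA
        have hnodpair : ([A2 o0, B o0] : List S).Nodup := by
          refine List.nodup_cons.mpr ⟨?_, List.nodup_singleton _⟩
          simp only [List.mem_singleton]
          exact fun h : A2 o0 = B o0 => ho0 h.symm
        rcases walk_master A2 B (Fintype.card S) [A2 o0, B o0] [o0] hnodpair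
          (by simp)
          (by
            intro i hi
            simp only [List.length_singleton] at hi
            have : i = 0 := by omega
            subst this
            simp)
          (by
            intro i hi
            simp only [List.length_singleton] at hi
            have : i = 0 := by omega
            subst this
            simp)
          (by simp)
          (by intro h; simp at h)
          (by simp) with hcycN | ⟨P, _, hsur⟩
        · obtain ⟨C⟩ := hcycN
          exact docycle C
        · exfalso
          rw [halleq] at hsur
          omega

end LemStar

/-- let `A1` induce no negative loop and let `sj` be a service
center.  Extend the instance by a new demand unit `d*` (modelled as
`none : Option D`) with `CM2 d* sj = 0` and `CM2 d* s = M` for `s ≠ sj`, where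
`M = 1 + Σ|CM| + Σ_s Σ_{j=1}^{|D|+1} |p s j|`, and let `A2` extend `A1` by
assigning `d*` to `sj`.
(a) If every loop of `A2` beginning at `sj` whose closing edge is a penalty
transfer edge directed into `sj` has nonnegative cost, then `A2` induces no
negative loop.
(b) If `Cmin` is such a loop of minimum cost and its cost is negative, then
removing `Cmin` yields an allotment inducing no negative loop. -/
theorem restore_optimality_after_insertion
    (D S : Type) [Fintype D] [DecidableEq D] [Fintype S] [DecidableEq S]
    (CM : D → S → ℤ) (c : S → ℕ) (p : S → ℕ → ℤ)
    (hp0 : ∀ s j, j ≤ c s → p s j = 0)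
    (hppos : ∀ s j, c s < j → 0 < p s j)
    (hpmono : ∀ s j, c s < j → p s j ≤ p s (j + 1))
    (A1 : D → S) (sj : S)
    (hA1 : ¬ InducesNegLoop CM p A1)
    (M : ℤ)
    (hM : M = 1 + (∑ d, ∑ s, |CM d s|) +
        ∑ s, ∑ j ∈ Finset.Icc 1 (Fintype.card D + 1), |p s j|)
    (CM2 : Option D → S → ℤ)
    (hCM2s : ∀ d s, CM2 (some d) s = CM d s)
    (hCM2j : CM2 none sj = 0)
    (hCM2o : ∀ s, s ≠ sj → CM2 none s = M)
    (A2 : Option D → S)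
    (hA2s : ∀ d, A2 (some d) = A1 d)
    (hA2n : A2 none = sj) :
    ((∀ L : Loop S (Option D), IsLoop A2 L →
        (∃ t, L.dem t = none ∧ L.vtx (cnext t) = sj) →
        0 ≤ loopCost CM2 p A2 L) → ¬ InducesNegLoop CM2 p A2) ∧
    (∀ Cmin : Loop S (Option D), IsLoop A2 Cmin →
        (∃ t, Cmin.dem t = none ∧ Cmin.vtx (cnext t) = sj) →
        (∀ L : Loop S (Option D), IsLoop A2 L →
          (∃ t, L.dem t = none ∧ L.vtx (cnext t) = sj) →
          loopCost CM2 p A2 Cmin ≤ loopCost CM2 p A2 L) →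
        loopCost CM2 p A2 Cmin < 0 →
        ¬ InducesNegLoop CM2 p (removeLoop A2 Cmin)) := by

  constructor
  · intro hcl
    rintro ⟨L, hL, hneg⟩
    by_cases hst : ∃ t, L.dem t = some none
    · exact absurd hneg (not_lt.mpr
        (dstar_loop_nonneg hp0 hppos hM hCM2s hCM2j hCM2o hA2n L hL hst))
    · by_cases hcl2 : ∃ t, L.dem t = none ∧ L.vtx (cnext t) = sj
      · exact absurd hneg (not_lt.mpr (hcl L hL hcl2))
      · push_neg at hst hcl2
        exact absurd hneg (not_lt.mpr
          (lift_loop_nonneg (pmono c p hp0 hppos hpmono) hA1 hCM2s hA2s hA2n L hL hst hcl2))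
  · intro Cmin hCl hCcl hCminmin hCneg
    rintro ⟨L3, hL3, hneg3⟩
    have hstC : ¬ ∃ t, Cmin.dem t = some none := by
      intro h
      exact absurd hCneg (not_lt.mpr
        (dstar_loop_nonneg hp0 hppos hM hCM2s hCM2j hCM2o hA2n Cmin hCl h))
    set A3 := removeLoop A2 Cmin with hA3
    have hA3n : A3 none = sj := by
      rw [hA3, removeLoop_eq_of_not hstC]
      exact hA2n
    have hcostA3 : cost CM2 p A3 = cost CM2 p A2 + loopCost CM2 p A2 Cmin := by
      rw [hA3]
      exact cost_removeLoop CM2 p A2 Cmin hCl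
    have hopt : ∀ B2 : Option D → S, cost CM2 p A3 ≤ cost CM2 p B2 := by
      intro B2
      by_cases hB2 : B2 none = sj
      · have hls := lemstar hp0 hppos hpmono hA1 hCM2s hA2s hA2n Cmin hCminmin
          (Fintype.card (Option D)) B2 hB2
          (le_trans (Finset.card_filter_le _ _) (le_of_eq (Finset.card_univ)))
        rw [hcostA3]
        by_cases hlt : occ B2 sj < occ A2 sj
        · rw [if_pos hlt] at hls; linarith
        · rw [if_neg hlt] at hls; linarith
      · have := far_cost_bound hp0 hppos hM hCM2s hCM2j hCM2o hA2s hA2n B2 hB2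
        rw [hcostA3]
        linarith
    have h1 : cost CM2 p (removeLoop A3 L3) = cost CM2 p A3 + loopCost CM2 p A3 L3 :=
      cost_removeLoop CM2 p A3 L3 hL3
    have h2 := hopt (removeLoop A3 L3)
    linarith
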